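/- arXiv:2002.01610 — 2 statements merged into one kernel-verified Lean document; each statement's English description precedes it below -/
import Mathlib

section
/- Any two distinct output AOEs arising from the same canonical AOE have the same set of unlabeled edges; more precisely, if 𝒜₁ and 𝒜₂ are output AOEs for the same canonical input, and if (u, v) is an unlabeled edge of 𝒜₁ with u = End_{𝒜₁}(T) and v = St_{𝒜₁}(T'), then in 𝒜₂ there is an unlabeled edge from End_{𝒜₂}(T) to St_{𝒜₂}(T'). -/
namespace AOEPaper

/-- An activity-on-edge graph: a directed multigraph on the vertex set `verts`,
whose task edges are indexed by the type `T` (the distinct task labels), each task `t`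
being an edge from `St t` to `En t`, together with a multiset `unl` of unlabeled edges. -/
structure AOE (V T : Type) where
  verts : Finset V
  St : T → V
  En : T → V
  stMem : ∀ t, St t ∈ verts
  enMem : ∀ t, En t ∈ verts
  unl : Multiset (V × V)
  unlMem : ∀ e ∈ unl, e.1 ∈ verts ∧ e.2 ∈ verts

/-- One-step adjacency: an unlabeled edge or a task edge from `a` to `b`. -/
def AOE.adj {V T : Type} (G : AOE V T) (a b : V) : Prop :=
  (a, b) ∈ G.unl ∨ ∃ t, G.St t = a ∧ G.En t = b

/-- The graph has no directed cycle. -/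
def AOE.Acyclic {V T : Type} (G : AOE V T) : Prop :=
  ∀ v : V, ¬ Relation.TransGen G.adj v v

/-- Task `t` reaches task `t'`: `En t = St t'` or there is a directed path from
`En t` to `St t'` (intended only for `t ≠ t'`). -/
def AOE.reach {V T : Type} (G : AOE V T) (t t' : T) : Prop :=
  Relation.ReflTransGen G.adj (G.En t) (G.St t')

/-- A sequence of tasks in which each task reaches the next. -/
def AOE.chain {V T : Type} (G : AOE V T) (l : List T) : Prop :=
  l.Chain' fun t t' => t ≠ t' ∧ G.reach t t'

/-- A potential critical path: a maximal sequence of tasks in which each task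
reaches the next (not a subsequence of any other such sequence). -/
def AOE.critPath {V T : Type} (G : AOE V T) (l : List T) : Prop :=
  G.chain l ∧ ∀ l' : List T, G.chain l' → l.Sublist l' → l' = l

/-- Two AOEs with the same task labels are equivalent if they have the same set of
potential critical paths. -/
def AOE.Equiv {V W T : Type} (G : AOE V T) (H : AOE W T) : Prop :=
  ∀ l : List T, G.critPath l ↔ H.critPath l

/-- An AOE is optimal if it minimizes the number of vertices in its equivalence class. -/
def Optimal {W T : Type} (G : AOE W T) : Prop :=
  ∀ (U : Type) (H : AOE U T), H.Acyclic → AOE.Equiv G H → G.verts.card ≤ H.verts.card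

/-- The vertex map replacing `v` by `u`. -/
def mergeV {V : Type} [DecidableEq V] (u v x : V) : V := if x = v then u else x

theorem mergeV_mem {V : Type} [DecidableEq V] {S : Finset V} (u v x : V) (hx : x ∈ S) :
    mergeV u v x ∈ insert u (S.erase v) := by
  unfold mergeV
  split_ifs with h
  · exact Finset.mem_insert_self _ _
  · exact Finset.mem_insert_of_mem (Finset.mem_erase.mpr ⟨h, hx⟩)

/-- Merge vertices `u` and `v` into the single vertex `u`. -/
def AOE.merge {V T : Type} [DecidableEq V] (G : AOE V T) (u v : V) : AOE V T where
  verts := insert u (G.verts.erase v)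
  St t := mergeV u v (G.St t)
  En t := mergeV u v (G.En t)
  stMem t := mergeV_mem u v (G.St t) (G.stMem t)
  enMem t := mergeV_mem u v (G.En t) (G.enMem t)
  unl := G.unl.map fun e => (mergeV u v e.1, mergeV u v e.2)
  unlMem := by
    intro e he
    rw [Multiset.mem_map] at he
    obtain ⟨a, ha, rfl⟩ := he
    obtain ⟨h1, h2⟩ := G.unlMem a ha
    exact ⟨mergeV_mem u v a.1 h1, mergeV_mem u v a.2 h2⟩

/-- Delete one copy of the unlabeled edge `(u, v)`. -/
def AOE.delUnl {V T : Type} [DecidableEq V] (G : AOE V T) (u v : V) : AOE V T where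
  verts := G.verts
  St := G.St
  En := G.En
  stMem := G.stMem
  enMem := G.enMem
  unl := G.unl.erase (u, v)
  unlMem := fun e he => G.unlMem e (Multiset.mem_of_mem_erase he)

/-- Rule 1 (outgoing version): `u` and `v` are distinct vertices with no outgoing task
edges and precisely the same outgoing neighbors. -/
def Rule1OutCond {V T : Type} (G : AOE V T) (u v : V) : Prop :=
  u ∈ G.verts ∧ v ∈ G.verts ∧ u ≠ v ∧
    (∀ t, G.St t ≠ u) ∧ (∀ t, G.St t ≠ v) ∧ ∀ w, G.adj u w ↔ G.adj v w

/-- Rule 1 (incoming version): `u` and `v` are distinct vertices with no incoming task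
edges and precisely the same incoming neighbors. -/
def Rule1InCond {V T : Type} (G : AOE V T) (u v : V) : Prop :=
  u ∈ G.verts ∧ v ∈ G.verts ∧ u ≠ v ∧
    (∀ t, G.En t ≠ u) ∧ (∀ t, G.En t ≠ v) ∧ ∀ w, G.adj w u ↔ G.adj w v

/-- Rule 2: `(u, v)` is an unlabeled edge and there is another directed path from `u`
to `v` not using this edge. -/
def Rule2Cond {V T : Type} [DecidableEq V] (G : AOE V T) (u v : V) : Prop :=
  (u, v) ∈ G.unl ∧ Relation.TransGen (G.delUnl u v).adj u v

/-- Rule 3: `(u, v)` is an unlabeled edge such that (i) there is no other path from `u`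
to `v`; (ii) if `u` has an outgoing task then `v` has no incoming edge other than `(u,v)`;
(iii) if `v` has an incoming task then `u` has no outgoing edge other than `(u,v)`;
(iv) every incoming neighbor of `v` has a path to every outgoing neighbor of `u`. -/
def Rule3Cond {V T : Type} [DecidableEq V] (G : AOE V T) (u v : V) : Prop :=
  (u, v) ∈ G.unl ∧
  (¬ Relation.TransGen (G.delUnl u v).adj u v) ∧
  ((∃ t, G.St t = u) → (∀ t, G.En t ≠ v) ∧ ∀ w, (w, v) ∈ G.unl → w = u) ∧
  ((∃ t, G.En t = v) → (∀ t, G.St t ≠ u) ∧ ∀ w, (u, w) ∈ G.unl → w = v) ∧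
  ∀ w z, G.adj w v → G.adj u z → Relation.ReflTransGen G.adj w z

/-- One application of a simplification rule. -/
inductive Step {V T : Type} [DecidableEq V] : AOE V T → AOE V T → Prop
  | rule1out {G : AOE V T} (u v : V) : Rule1OutCond G u v → Step G (G.merge u v)
  | rule1in {G : AOE V T} (u v : V) : Rule1InCond G u v → Step G (G.merge u v)
  | rule2 {G : AOE V T} (u v : V) : Rule2Cond G u v → Step G (G.delUnl u v)
  | rule3 {G : AOE V T} (u v : V) : Rule3Cond G u v → Step G ((G.delUnl u v).merge u v)

/-- A canonical AOE: the naive expansion of an activity-on-node graph. Each task has its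
own pair of endpoint vertices, all pairwise distinct; there are a global start vertex `s`
and a global end vertex `e`; unlabeled edges other than those leaving `s` or entering `e`
go from end vertices of tasks to start vertices of tasks; `s` has unlabeled edges to
exactly the vertices whose only incoming edges come from `s`, and `e` has unlabeled edges
from exactly the vertices whose only outgoing edges go to `e`. -/
def Canonical {V T : Type} [DecidableEq V] [Fintype T] (G : AOE V T) : Prop :=
  G.Acyclic ∧ G.unl.Nodup ∧
  Function.Injective G.St ∧ Function.Injective G.En ∧
  (∀ t t' : T, G.St t ≠ G.En t') ∧
  ∃ s e : V, s ≠ e ∧ s ∈ G.verts ∧ e ∈ G.verts ∧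
    (∀ t, G.St t ≠ s ∧ G.St t ≠ e ∧ G.En t ≠ s ∧ G.En t ≠ e) ∧
    (G.verts =
      insert s (insert e (Finset.image G.St Finset.univ ∪ Finset.image G.En Finset.univ))) ∧
    (∀ a b : V, (a, b) ∈ G.unl → a ≠ s → b ≠ e → (∃ t, G.En t = a) ∧ ∃ t', G.St t' = b) ∧
    (∀ b : V, (s, b) ∈ G.unl ↔
      b ∈ G.verts ∧ b ≠ s ∧ (∀ t, G.En t ≠ b) ∧ ∀ a, (a, b) ∈ G.unl → a = s) ∧
    (∀ a : V, (a, e) ∈ G.unl ↔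
      a ∈ G.verts ∧ a ≠ e ∧ (∀ t, G.St t ≠ a) ∧ ∀ b, (a, b) ∈ G.unl → b = e)

/-- An output AOE: obtained from a canonical AOE by a finite sequence of rule
applications, such that no rule can still be applied. -/
def IsOutput {V T : Type} [DecidableEq V] [Fintype T] (G A : AOE V T) : Prop :=
  Canonical G ∧ Relation.ReflTransGen Step G A ∧ ∀ B : AOE V T, ¬ Step A B

theorem mergeSetV_mem {V : Type} [DecidableEq V] {S : Finset V} (C : Finset V) (c x : V)
    (hx : x ∈ S) : (if x ∈ C then c else x) ∈ insert c (S \ C) := by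
  split_ifs with h
  · exact Finset.mem_insert_self _ _
  · exact Finset.mem_insert_of_mem (Finset.mem_sdiff.mpr ⟨hx, h⟩)

/-- Merge all vertices of `C` into the single vertex `c`. -/
def AOE.mergeSet {V T : Type} [DecidableEq V] (G : AOE V T) (C : Finset V) (c : V) :
    AOE V T where
  verts := insert c (G.verts \ C)
  St t := if G.St t ∈ C then c else G.St t
  En t := if G.En t ∈ C then c else G.En t
  stMem t := mergeSetV_mem C c (G.St t) (G.stMem t)
  enMem t := mergeSetV_mem C c (G.En t) (G.enMem t)
  unl := G.unl.map fun e => (if e.1 ∈ C then c else e.1, if e.2 ∈ C then c else e.2)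
  unlMem := by
    intro e he
    rw [Multiset.mem_map] at he
    obtain ⟨a, ha, rfl⟩ := he
    obtain ⟨h1, h2⟩ := G.unlMem a ha
    exact ⟨mergeSetV_mem C c a.1 h1, mergeSetV_mem C c a.2 h2⟩

section Statement14Proof

open Relation

variable {V T : Type}

lemma AOE.adj_mem (A : AOE V T) {a b : V} (h : A.adj a b) : a ∈ A.verts ∧ b ∈ A.verts := by
  rcases h with h | ⟨t, h1, h2⟩
  · exact A.unlMem _ h
  · exact h1 ▸ h2 ▸ ⟨A.stMem t, A.enMem t⟩

lemma rtg_transGen {r : V → V → Prop} {a b : V} (h : ReflTransGen r a b) (ne : a ≠ b) :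
    TransGen r a b := by
  rcases h.cases_head with h | ⟨c, h1, h2⟩
  · exact absurd h ne
  · exact TransGen.head' h1 h2

lemma acyc_ne {A : AOE V T} (hA : A.Acyclic) {a b : V} (h : A.adj a b) : a ≠ b := by
  rintro rfl; exact hA a (TransGen.single h)

/-- tail of an unlabeled edge is the end of a task, or a global source -/
def GoodTail (A : AOE V T) (a : V) : Prop := (∃ t, A.En t = a) ∨ ∀ x, ¬ A.adj x a

/-- head of an unlabeled edge is the start of a task, or a global sink -/
def GoodHead (A : AOE V T) (b : V) : Prop := (∃ t, A.St t = b) ∨ ∀ x, ¬ A.adj b x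

def P4 (A : AOE V T) : Prop := ∀ e ∈ A.unl, GoodTail A e.1 ∧ GoodHead A e.2

def NoMid (A : AOE V T) (t t' : T) : Prop :=
  ¬ ∃ c, c ≠ t ∧ c ≠ t' ∧ A.reach t c ∧ A.reach c t'

def Q1 (A : AOE V T) (t t' : T) : Prop :=
  ∀ w z, A.reach w t' → A.reach t z → A.reach w z

def Mstar (A : AOE V T) (a b : T) : Prop :=
  a ≠ b ∧ A.reach a b ∧ NoMid A a b ∧ Q1 A a b

def Estar (A : AOE V T) (t t' : T) : Prop :=
  t ≠ t' ∧ A.reach t t' ∧ NoMid A t t' ∧ ¬ Q1 A t t' ∧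
  ¬ ∃ a b, Mstar A a b ∧ A.reach t b ∧ A.reach a t' ∧ ¬ Mstar A t b ∧ ¬ Mstar A a t'

def Inv (A : AOE V T) : Prop :=
  A.Acyclic ∧ P4 A ∧ (∀ a b, A.En a = A.St b → Mstar A a b) ∧
  (∃ s ∈ A.verts, ∀ x ∈ A.verts, ReflTransGen A.adj s x) ∧
  (∃ e ∈ A.verts, ∀ x ∈ A.verts, ReflTransGen A.adj x e)

section transfer
variable {A B : AOE V T} (h : ∀ t t', A.reach t t' ↔ B.reach t t')
include h

lemma noMid_transfer (t t' : T) : NoMid A t t' ↔ NoMid B t t' := by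
  unfold NoMid; simp only [h]

lemma q1_transfer (t t' : T) : Q1 A t t' ↔ Q1 B t t' := by
  unfold Q1; simp only [h]

lemma mstar_transfer (t t' : T) : Mstar A t t' ↔ Mstar B t t' := by
  unfold Mstar; rw [noMid_transfer h, q1_transfer h, h]

lemma estar_transfer (t t' : T) : Estar A t t' ↔ Estar B t t' := by
  unfold Estar
  rw [noMid_transfer h, q1_transfer h, h]
  simp only [mstar_transfer h, h]

end transfer

section delUnl
variable [DecidableEq V]

lemma delUnl_adj_sub {A : AOE V T} {u v a b : V} (h : (A.delUnl u v).adj a b) : A.adj a b := by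
  rcases h with h | h
  · exact Or.inl (Multiset.mem_of_mem_erase h)
  · exact Or.inr h

lemma task_adj_delUnl {A : AOE V T} {u v : V} (t : T) :
    (A.delUnl u v).adj (A.St t) (A.En t) := Or.inr ⟨t, rfl, rfl⟩

lemma step_split {A : AOE V T} (u v : V) {p q : V} (h : A.adj p q) :
    (A.delUnl u v).adj p q ∨ (p = u ∧ q = v) := by
  rcases h with h | h
  · by_cases he : (p, q) = (u, v)
    · exact Or.inr ⟨congrArg Prod.fst he, congrArg Prod.snd he⟩
    · exact Or.inl (Or.inl ((Multiset.mem_erase_of_ne he).2 h))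
  · exact Or.inl (Or.inr h)

lemma avoidSplit (A : AOE V T) (u v : V) {x y : V} (h : ReflTransGen A.adj x y) :
    ReflTransGen (A.delUnl u v).adj x y ∨
      (ReflTransGen A.adj x u ∧ ReflTransGen A.adj v y) := by
  induction h with
  | refl => exact Or.inl ReflTransGen.refl
  | @tail b c hxb hbc ih =>
    rcases step_split u v hbc with hs | ⟨rfl, rfl⟩
    · rcases ih with ih | ⟨h1, h2⟩
      · exact Or.inl (ih.tail hs)
      · exact Or.inr ⟨h1, h2.tail hbc⟩
    · exact Or.inr ⟨hxb, ReflTransGen.refl⟩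

lemma W2 {A : AOE V T} (hA : A.Acyclic) {u v m : V} (h1 : ReflTransGen A.adj u m)
    (h2 : ReflTransGen A.adj m v) (hmu : m ≠ u) (hmv : m ≠ v) :
    TransGen (A.delUnl u v).adj u v := by
  rcases avoidSplit A u v h1 with h1' | ⟨_, hvm⟩
  · rcases avoidSplit A u v h2 with h2' | ⟨hmu', _⟩
    · have huv : u ≠ v := by
        rintro rfl
        exact hA u ((rtg_transGen h1 (Ne.symm hmu)).trans_left h2)
      exact rtg_transGen (h1'.trans h2') huv
    · exact absurd ((rtg_transGen h1 (Ne.symm hmu)).trans_left hmu') (hA u)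
  · exact absurd ((rtg_transGen hvm (Ne.symm hmv)).trans_left h2) (hA v)

/-- a "mid-task" path from `u` to `v` yields a path avoiding the unlabeled edge `(u,v)`. -/
lemma W3 {A : AOE V T} (hA : A.Acyclic) {u v : V} {c : T}
    (h1 : ReflTransGen A.adj u (A.St c)) (h2 : ReflTransGen A.adj (A.En c) v) :
    TransGen (A.delUnl u v).adj u v := by
  have htask : A.adj (A.St c) (A.En c) := Or.inr ⟨c, rfl, rfl⟩
  have hqu : A.En c ≠ u := by
    rintro he
    exact hA u (TransGen.tail' h1 (he ▸ htask))
  have hpv : A.St c ≠ v := by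
    rintro he
    exact hA v (TransGen.head' (he ▸ htask) h2)
  by_cases hpu : A.St c = u
  · by_cases hqv : A.En c = v
    · exact TransGen.single (hpu ▸ hqv ▸ task_adj_delUnl c)
    · rcases avoidSplit A u v h2 with h2' | ⟨hq, _⟩
      · exact TransGen.head' (hpu ▸ task_adj_delUnl c) h2'
      · exact absurd (TransGen.head' (hpu ▸ htask) hq) (hA u)
  · exact W2 hA h1 (ReflTransGen.head htask h2) hpu hpv

end delUnl

lemma FIN {α : Type} [DecidableEq α] (r : α → α → Prop) (irr : ∀ x, ¬ TransGen r x x) :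
    ∀ S : Finset α, (∀ x ∈ S, ∃ y ∈ S, r y x) → S = ∅ := by
  classical
  intro S
  induction S using Finset.strongInduction with
  | _ S ih =>
    intro h
    by_contra hne
    obtain ⟨x, hx⟩ := Finset.nonempty_of_ne_empty hne
    set S' := S.filter (fun z => TransGen r z x) with hS'
    have hsub : S' ⊂ S := by
      refine Finset.ssubset_iff_of_subset (Finset.filter_subset _ _) |>.2 ⟨x, hx, ?_⟩
      simp only [hS', Finset.mem_filter]
      rintro ⟨-, hc⟩; exact irr x hc
    have h' : S' = ∅ := by
      refine ih S' hsub ?_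
      intro z hz
      simp only [hS', Finset.mem_filter] at hz
      obtain ⟨y, hy, hr⟩ := h z hz.1
      exact ⟨y, by simp only [hS', Finset.mem_filter]; exact ⟨hy, TransGen.head hr hz.2⟩, hr⟩
    obtain ⟨y, hy, hr⟩ := h x hx
    have : y ∈ S' := by simp only [hS', Finset.mem_filter]; exact ⟨hy, TransGen.single hr⟩
    rw [h'] at this
    exact absurd this (Finset.notMem_empty y)

end Statement14Proof
section Statement14Proof2

open Relation

variable {V T : Type} [DecidableEq V]

lemma mergeV_self (u v : V) : mergeV u v u = u := by
  unfold mergeV; split_ifs with h; exact h ▸ rfl; rfl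

lemma mergeV_v (u v : V) : mergeV u v v = u := by
  unfold mergeV; rw [if_pos rfl]

lemma mergeV_ne (u : V) {v x : V} (h : x ≠ v) : mergeV u v x = x := by
  unfold mergeV; rw [if_neg h]

lemma mergeV_fiber {u v a b : V} (h : mergeV u v a = mergeV u v b) :
    a = b ∨ ((a = u ∨ a = v) ∧ (b = u ∨ b = v)) := by
  unfold mergeV at h
  split_ifs at h with h1 h2 h2
  · exact Or.inl (h1.trans h2.symm)
  · exact Or.inr ⟨Or.inr h1, Or.inl h.symm⟩
  · exact Or.inr ⟨Or.inl h, Or.inr h2⟩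
  · exact Or.inl h

lemma merge_St (A : AOE V T) (u v : V) (t : T) :
    (A.merge u v).St t = mergeV u v (A.St t) := rfl

lemma merge_En (A : AOE V T) (u v : V) (t : T) :
    (A.merge u v).En t = mergeV u v (A.En t) := rfl

lemma merge_adj_fwd {A : AOE V T} {u v a b : V} (h : A.adj a b) :
    (A.merge u v).adj (mergeV u v a) (mergeV u v b) := by
  rcases h with h | ⟨t, h1, h2⟩
  · exact Or.inl (by
      show _ ∈ Multiset.map _ _
      rw [Multiset.mem_map]
      exact ⟨(a, b), h, rfl⟩)
  · exact Or.inr ⟨t, by rw [merge_St, h1], by rw [merge_En, h2]⟩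

lemma merge_adj_bwd {A : AOE V T} {u v x y : V} (h : (A.merge u v).adj x y) :
    ∃ a b, A.adj a b ∧ mergeV u v a = x ∧ mergeV u v b = y := by
  rcases h with h | ⟨t, h1, h2⟩
  · obtain ⟨⟨a, b⟩, hab, he⟩ := Multiset.mem_map.1 h
    exact ⟨a, b, Or.inl hab, congrArg Prod.fst he, congrArg Prod.snd he⟩
  · exact ⟨A.St t, A.En t, Or.inr ⟨t, rfl, rfl⟩, h1, h2⟩

/-- Backward path simulation for Rule 1 (outgoing version). -/
lemma B1out {A : AOE V T} {u v : V} (cond : Rule1OutCond A u v) {x y : V}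
    (h : ReflTransGen (A.merge u v).adj x y) :
    ∀ a, mergeV u v a = x → ∃ b, mergeV u v b = y ∧ ReflTransGen A.adj a b := by
  induction h using Relation.ReflTransGen.head_induction_on with
  | refl => exact fun a ha => ⟨a, ha, ReflTransGen.refl⟩
  | head hstep _ ih =>
    intro a ha
    obtain ⟨p, q, hpq, hp, hq⟩ := merge_adj_bwd hstep
    have haq : A.adj a q := by
      rcases mergeV_fiber (ha.trans hp.symm) with rfl | ⟨ha', hp'⟩
      · exact hpq
      · have h6 : A.adj u q ↔ A.adj v q := cond.2.2.2.2.2 q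
        have hu : A.adj u q ∧ A.adj v q := by
          rcases hp' with h | h
          · rw [h] at hpq; exact ⟨hpq, h6.1 hpq⟩
          · rw [h] at hpq; exact ⟨h6.2 hpq, hpq⟩
        rcases ha' with h | h
        · rw [h]; exact hu.1
        · rw [h]; exact hu.2
    obtain ⟨b, hb, hab⟩ := ih q hq
    exact ⟨b, hb, ReflTransGen.head haq hab⟩

/-- Backward path simulation for Rule 1 (incoming version). -/
lemma B1in {A : AOE V T} {u v : V} (cond : Rule1InCond A u v) {x y : V}
    (h : ReflTransGen (A.merge u v).adj x y) :
    ∀ b, mergeV u v b = y → ∃ a, mergeV u v a = x ∧ ReflTransGen A.adj a b := by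
  induction h with
  | refl => exact fun b hb => ⟨b, hb, ReflTransGen.refl⟩
  | @tail c y' _ hcy ih =>
    intro b hb
    obtain ⟨p, q, hpq, hp, hq⟩ := merge_adj_bwd hcy
    have hpb : A.adj p b := by
      rcases mergeV_fiber (hb.trans hq.symm) with rfl | ⟨hb', hq'⟩
      · exact hpq
      · have h6 : A.adj p u ↔ A.adj p v := cond.2.2.2.2.2 p
        have hu : A.adj p u ∧ A.adj p v := by
          rcases hq' with h | h
          · rw [h] at hpq; exact ⟨hpq, h6.1 hpq⟩
          · rw [h] at hpq; exact ⟨h6.2 hpq, hpq⟩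
        rcases hb' with h | h
        · rw [h]; exact hu.1
        · rw [h]; exact hu.2
    obtain ⟨a, hap, hab⟩ := ih p hp
    exact ⟨a, hap, hab.tail hpb⟩

/-- Backward path simulation for Rule 3. -/
lemma B3 {A : AOE V T} {u v : V} (cond : Rule3Cond A u v) {x y : V}
    (h : ReflTransGen ((A.delUnl u v).merge u v).adj x y) :
    ∀ a, mergeV u v a = x → ∃ b, mergeV u v b = y ∧
      (ReflTransGen A.adj a b ∨ (ReflTransGen A.adj a v ∧ ReflTransGen A.adj u b)) := by
  have hedge : A.adj u v := Or.inl cond.1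
  induction h using Relation.ReflTransGen.head_induction_on with
  | refl => exact fun a ha => ⟨a, ha, Or.inl ReflTransGen.refl⟩
  | head hstep _ ih =>
    intro a ha
    obtain ⟨p, q, hpq, hp, hq⟩ := merge_adj_bwd hstep
    have hpq' : A.adj p q := delUnl_adj_sub hpq
    obtain ⟨b, hb, hres⟩ := ih q hq
    rcases mergeV_fiber (ha.trans hp.symm) with rfl | ⟨ha', hp'⟩
    · refine ⟨b, hb, ?_⟩
      rcases hres with hres | ⟨h1, h2⟩
      · exact Or.inl (ReflTransGen.head hpq' hres)
      · exact Or.inr ⟨ReflTransGen.head hpq' h1, h2⟩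
    · rcases ha' with ha' | ha'
      · -- a = u
        have huq : ReflTransGen A.adj u q := by
          rcases hp' with h | h
          · rw [h] at hpq'; exact ReflTransGen.single hpq'
          · rw [h] at hpq'; exact ReflTransGen.head hedge (ReflTransGen.single hpq')
        rw [ha']
        refine ⟨b, hb, ?_⟩
        rcases hres with hres | ⟨h1, h2⟩
        · exact Or.inl (huq.trans hres)
        · exact Or.inr ⟨huq.trans h1, h2⟩
      · -- a = v
        rcases hp' with h | h
        · -- p = u
          rw [h] at hpq'
          rw [ha']
          refine ⟨b, hb, Or.inr ⟨ReflTransGen.refl, ?_⟩⟩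
          rcases hres with hres | ⟨h1, h2⟩
          · exact ReflTransGen.head hpq' hres
          · exact h2
        · -- p = v = a
          rw [show a = p from ha'.trans h.symm]
          refine ⟨b, hb, ?_⟩
          rcases hres with hres | ⟨h1, h2⟩
          · exact Or.inl (ReflTransGen.head hpq' hres)
          · exact Or.inr ⟨ReflTransGen.head hpq' h1, h2⟩

end Statement14Proof2
section Statement14Proof3

open Relation

variable {V T : Type} [DecidableEq V]

lemma rtg_lift_id {r p : V → V → Prop} (h : ∀ a b, r a b → ReflTransGen p a b)
    {x y : V} (hr : ReflTransGen r x y) : ReflTransGen p x y := by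
  induction hr with
  | refl => exact ReflTransGen.refl
  | tail _ hbc ih => exact ih.trans (h _ _ hbc)

lemma rtg_lift_f (f : V → V) {r p : V → V → Prop}
    (h : ∀ a b, r a b → ReflTransGen p (f a) (f b))
    {x y : V} (hr : ReflTransGen r x y) : ReflTransGen p (f x) (f y) := by
  induction hr with
  | refl => exact ReflTransGen.refl
  | tail _ hbc ih => exact ih.trans (h _ _ hbc)

lemma mergeV_eq_u {u v x : V} (h : mergeV u v x = u) : x = u ∨ x = v := by
  unfold mergeV at h
  split_ifs at h with h1
  · exact Or.inr h1
  · exact Or.inl h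

/-! ### Rule 2 -/

lemma rule2_adj_rtg {A : AOE V T} {u v : V} (cond : Rule2Cond A u v) {a b : V}
    (h : A.adj a b) : ReflTransGen (A.delUnl u v).adj a b := by
  rcases step_split u v h with hs | ⟨rfl, rfl⟩
  · exact ReflTransGen.single hs
  · exact cond.2.to_reflTransGen

lemma rule2_reach_iff {A : AOE V T} {u v : V} (cond : Rule2Cond A u v) (t t' : T) :
    A.reach t t' ↔ (A.delUnl u v).reach t t' := by
  constructor
  · exact fun h => rtg_lift_id (fun a b hab => rule2_adj_rtg cond hab) h
  · exact fun h => rtg_lift_id (fun a b hab => ReflTransGen.single (delUnl_adj_sub hab)) h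

lemma rule2_acyclic {A : AOE V T} (hA : A.Acyclic) (u v : V) : (A.delUnl u v).Acyclic :=
  fun x hx => hA x (TransGen.mono (fun _ _ h => delUnl_adj_sub h) _ _ hx)

/-! ### Rule 1 -/

lemma rule1out_reach_iff {A : AOE V T} {u v : V} (cond : Rule1OutCond A u v) (t t' : T) :
    A.reach t t' ↔ (A.merge u v).reach t t' := by
  constructor
  · exact fun h => rtg_lift_f (mergeV u v) (fun a b hab => ReflTransGen.single (merge_adj_fwd hab)) h
  · intro h
    obtain ⟨b, hb, hab⟩ := B1out cond h (A.En t) rfl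
    have hb2 : mergeV u v b = mergeV u v (A.St t') := hb
    have heq : b = A.St t' := by
      rcases mergeV_fiber hb2 with h' | ⟨_, h'⟩
      · exact h'
      · rcases h' with h' | h'
        · exact absurd h' (cond.2.2.2.1 t')
        · exact absurd h' (cond.2.2.2.2.1 t')
    show ReflTransGen A.adj (A.En t) (A.St t')
    rw [← heq]; exact hab

lemma rule1in_reach_iff {A : AOE V T} {u v : V} (cond : Rule1InCond A u v) (t t' : T) :
    A.reach t t' ↔ (A.merge u v).reach t t' := by
  constructor
  · exact fun h => rtg_lift_f (mergeV u v) (fun a b hab => ReflTransGen.single (merge_adj_fwd hab)) h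
  · intro h
    obtain ⟨a, ha, hab⟩ := B1in cond h (A.St t') rfl
    have ha2 : mergeV u v a = mergeV u v (A.En t) := ha
    have heq : a = A.En t := by
      rcases mergeV_fiber ha2 with h' | ⟨_, h'⟩
      · exact h'
      · rcases h' with h' | h'
        · exact absurd h' (cond.2.2.2.1 t)
        · exact absurd h' (cond.2.2.2.2.1 t)
    show ReflTransGen A.adj (A.En t) (A.St t')
    rw [← heq]; exact hab

lemma rule1out_acyclic {A : AOE V T} (hA : A.Acyclic) {u v : V}
    (cond : Rule1OutCond A u v) : (A.merge u v).Acyclic := by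
  intro x hx
  obtain ⟨c, hstep, hrest⟩ := TransGen.head'_iff.mp hx
  obtain ⟨a₁, b₁, hab, ha₁, hb₁⟩ := merge_adj_bwd hstep
  obtain ⟨b₂, hb₂, h2⟩ := B1out cond hrest b₁ hb₁
  have hadj : A.adj b₂ b₁ := by
    rcases mergeV_fiber (hb₂.trans ha₁.symm) with h' | ⟨hb', ha'⟩
    · rw [h']; exact hab
    · have h6 : A.adj u b₁ ↔ A.adj v b₁ := cond.2.2.2.2.2 b₁
      have hu : A.adj u b₁ ∧ A.adj v b₁ := by
        rcases ha' with h' | h'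
        · rw [h'] at hab; exact ⟨hab, h6.1 hab⟩
        · rw [h'] at hab; exact ⟨h6.2 hab, hab⟩
      rcases hb' with h' | h'
      · rw [h']; exact hu.1
      · rw [h']; exact hu.2
  exact hA b₂ (TransGen.head' hadj h2)

lemma rule1in_acyclic {A : AOE V T} (hA : A.Acyclic) {u v : V}
    (cond : Rule1InCond A u v) : (A.merge u v).Acyclic := by
  intro x hx
  obtain ⟨c, hrest, hstep⟩ := TransGen.tail'_iff.mp hx
  obtain ⟨a₁, b₁, hab, ha₁, hb₁⟩ := merge_adj_bwd hstep
  obtain ⟨a₂, ha₂, h2⟩ := B1in cond hrest a₁ ha₁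
  have hadj : A.adj a₁ a₂ := by
    rcases mergeV_fiber (ha₂.trans hb₁.symm) with h' | ⟨ha', hb'⟩
    · rw [h']; exact hab
    · have h6 : A.adj a₁ u ↔ A.adj a₁ v := cond.2.2.2.2.2 a₁
      have hu : A.adj a₁ u ∧ A.adj a₁ v := by
        rcases hb' with h' | h'
        · rw [h'] at hab; exact ⟨hab, h6.1 hab⟩
        · rw [h'] at hab; exact ⟨h6.2 hab, hab⟩
      rcases ha' with h' | h'
      · rw [h']; exact hu.1
      · rw [h']; exact hu.2
  exact hA a₂ (TransGen.tail' h2 hadj)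

/-! ### Rule 3 -/

lemma rule3_reach_fwd {A : AOE V T} {u v : V} (t t' : T)
    (h : A.reach t t') : ((A.delUnl u v).merge u v).reach t t' := by
  refine rtg_lift_f (mergeV u v) (fun a b hab => ?_) h
  rcases step_split u v hab with hs | ⟨rfl, rfl⟩
  · exact ReflTransGen.single (merge_adj_fwd (A := A.delUnl u v) hs)
  · rw [mergeV_self, mergeV_v]

/-- no other in-edge of `v`: a path into `v` from a task-end passes through `u`. -/
lemma rule3_H1 {A : AOE V T} {u v : V} (cond : Rule3Cond A u v)
    (hSt : ∃ x, A.St x = u) {s : V} (hEn : ∃ y, A.En y = s)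
    (hw : ReflTransGen A.adj s v) : ReflTransGen A.adj s u := by
  obtain ⟨hEnv, hin⟩ := cond.2.2.1 hSt
  rcases hw.cases_tail with he | ⟨c, hc, hcv⟩
  · obtain ⟨y, hy⟩ := hEn
    exact absurd (hy.trans he.symm) (hEnv y)
  · rcases hcv with hcv | ⟨y, _, hy2⟩
    · exact (hin c hcv) ▸ hc
    · exact absurd hy2 (hEnv y)

lemma rule3_reach_bwd {A : AOE V T} (hA : A.Acyclic) {u v : V} (cond : Rule3Cond A u v)
    {t t' : T} (h : ((A.delUnl u v).merge u v).reach t t') : A.reach t t' := by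
  have hedge : A.adj u v := Or.inl cond.1
  obtain ⟨b, hb0, hres⟩ := B3 cond h (A.En t) rfl
  have hb : mergeV u v b = mergeV u v (A.St t') := hb0
  show ReflTransGen A.adj (A.En t) (A.St t')
  -- endgame: from a path to some preimage of `St t'`, build a path to `St t'`.
  have endgame : ∀ b, mergeV u v b = mergeV u v (A.St t') →
      ReflTransGen A.adj (A.En t) b → ReflTransGen A.adj (A.En t) (A.St t') := by
    intro b hb hwb
    rcases mergeV_fiber hb with h' | ⟨hb', hq'⟩
    · rw [← h']; exact hwb
    · rcases hb' with hb' | hb' <;> rcases hq' with hq' | hq'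
      · rw [hq', ← hb']; exact hwb
      · rw [hq']; rw [hb'] at hwb; exact hwb.tail hedge
      · rw [hq']; exact rule3_H1 cond ⟨t', hq'⟩ ⟨t, rfl⟩ (by rw [hb'] at hwb; exact hwb)
      · rw [hq', ← hb']; exact hwb
  rcases hres with hwb | ⟨h1, h2⟩
  · exact endgame b hb hwb
  · -- h1 : RTG (En t) v, h2 : RTG u b
    by_cases hw0v : A.En t = v
    · -- task `t` ends at `v`
      obtain ⟨hStu, hout⟩ := cond.2.2.2.1 ⟨t, hw0v⟩
      rcases h2.cases_head with he | ⟨z₀, hz, hzb⟩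
      · -- u = b
        by_cases hqv : A.St t' = v
        · rw [hqv, hw0v]
        · exfalso
          have hmv : mergeV u v (A.St t') = u := by rw [← hb, ← he, mergeV_self]
          rcases mergeV_eq_u hmv with h' | h'
          · exact (cond.2.2.1 ⟨t', h'⟩).1 t hw0v
          · exact hqv h'
      · -- first step u → z₀ must go to v
        have hz0 : z₀ = v := by
          rcases hz with hz | ⟨x, hx, _⟩
          · exact hout z₀ hz
          · exact absurd hx (hStu x)
        refine endgame b hb ?_
        rw [hw0v, ← hz0]; exact hzb
    · -- decompose the path into v : last step from c
      rcases h1.cases_tail with he | ⟨c, hc, hcv⟩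
      · exact absurd he.symm hw0v
      · rcases h2.cases_head with he | ⟨z₀, hz, hzb⟩
        · -- u = b
          by_cases hqv : A.St t' = v
          · rw [hqv]; exact h1
          · have hmv : mergeV u v (A.St t') = u := by rw [← hb, ← he, mergeV_self]
            have hq : A.St t' = u := by
              rcases mergeV_eq_u hmv with h' | h'
              · exact h'
              · exact absurd h' hqv
            rw [hq]
            exact rule3_H1 cond ⟨t', hq⟩ ⟨t, rfl⟩ h1
        · have hcz := cond.2.2.2.2 c z₀ hcv hz
          exact endgame b hb (hc.trans (hcz.trans hzb))

lemma rule3_acyclic {A : AOE V T} (hA : A.Acyclic) {u v : V} (cond : Rule3Cond A u v) :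
    ((A.delUnl u v).merge u v).Acyclic := by
  have hedge : A.adj u v := Or.inl cond.1
  have hi := cond.2.1
  intro x hx
  obtain ⟨c, hstep, hrest⟩ := TransGen.head'_iff.mp hx
  obtain ⟨a₁, b₁, hab, ha₁, hb₁⟩ := merge_adj_bwd hstep
  have hab' : A.adj a₁ b₁ := delUnl_adj_sub hab
  obtain ⟨b₂, hb₂, hres⟩ := B3 cond hrest b₁ hb₁
  by_cases heq : b₂ = a₁
  · rcases hres with hL | ⟨h1, h2⟩
    · rw [heq] at hL
      exact hA a₁ (TransGen.head' hab' hL)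
    · rw [heq] at h2
      rcases avoidSplit A u v h2 with h2' | ⟨_, hva⟩
      · rcases avoidSplit A u v h1 with h1' | ⟨hbu, _⟩
        · exact hi ((TransGen.tail' h2' hab).trans_left h1')
        · exact hA u ((TransGen.tail' h2 hab').trans_left hbu)
      · exact hA v ((TransGen.tail' hva hab').trans_left h1)
  · have hpair := mergeV_fiber (hb₂.trans ha₁.symm)
    rcases hpair with h' | ⟨hb', ha'⟩
    · exact absurd h' heq
    · rcases hb' with hb' | hb' <;> rcases ha' with ha' | ha'
      · exact absurd (hb'.trans ha'.symm) heq
      · -- b₂ = u, a₁ = v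
        rw [ha'] at hab'
        rcases hres with hL | ⟨h1, _⟩
        · rw [hb'] at hL
          exact hA v (TransGen.head' hab' (hL.tail hedge))
        · exact hA v (TransGen.head' hab' h1)
      · -- b₂ = v, a₁ = u
        rw [ha'] at hab hab'
        have h1 : ReflTransGen A.adj b₁ v := by
          rcases hres with hL | ⟨h1, _⟩
          · rw [hb'] at hL; exact hL
          · exact h1
        rcases avoidSplit A u v h1 with h1' | ⟨hbu, _⟩
        · exact hi (TransGen.head' hab h1')
        · exact hA u (TransGen.head' hab' hbu)
      · exact absurd (hb'.trans ha'.symm) heq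

end Statement14Proof3
section Statement14Proof4

open Relation

variable {V T : Type} [DecidableEq V]

lemma mergeV_fmem {u v a : V} (hav : a = u ∨ a = v) : mergeV u v a = u := by
  rcases hav with h | h <;> rw [h]
  · exact mergeV_self u v
  · exact mergeV_v u v

lemma rule3_no_dup {A : AOE V T} {u v : V} (cond : Rule3Cond A u v) :
    (u, v) ∉ A.unl.erase (u, v) := by
  intro h
  exact cond.2.1 (TransGen.single (Or.inl h))

/-- unlabeled edges of a merge come from unlabeled edges. -/
lemma merge_unl_bwd {A : AOE V T} {u v : V} {e : V × V} (he : e ∈ (A.merge u v).unl) :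
    ∃ a b, (a, b) ∈ A.unl ∧ e = (mergeV u v a, mergeV u v b) := by
  obtain ⟨⟨a, b⟩, hab, h⟩ := Multiset.mem_map.1 he
  exact ⟨a, b, hab, h.symm⟩

lemma rule2_P4 {A : AOE V T} {u v : V} (hP : P4 A) : P4 (A.delUnl u v) := by
  intro e he
  obtain ⟨ht, hh⟩ := hP e (Multiset.mem_of_mem_erase he)
  constructor
  · rcases ht with ⟨t, h⟩ | h
    · exact Or.inl ⟨t, h⟩
    · exact Or.inr fun x hx => h x (delUnl_adj_sub hx)
  · rcases hh with ⟨t, h⟩ | h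
    · exact Or.inl ⟨t, h⟩
    · exact Or.inr fun x hx => h x (delUnl_adj_sub hx)

lemma rule1out_P4 {A : AOE V T} {u v : V} (cond : Rule1OutCond A u v) (hP : P4 A) :
    P4 (A.merge u v) := by
  have h6 := cond.2.2.2.2.2
  intro e he
  obtain ⟨a, b, hab, rfl⟩ := merge_unl_bwd he
  constructor
  · -- GoodTail
    show GoodTail (A.merge u v) (mergeV u v a)
    by_cases hav : a = u ∨ a = v
    · have hadjab : A.adj a b := Or.inl hab
      have key : (∃ t, A.En t = u ∨ A.En t = v) ∨
          ((∀ p, ¬ A.adj p u) ∧ (∀ p, ¬ A.adj p v)) := by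
        have hu : A.adj u b ∧ A.adj v b := by
          rcases hav with h | h <;> rw [h] at hadjab
          · exact ⟨hadjab, (h6 b).1 hadjab⟩
          · exact ⟨(h6 b).2 hadjab, hadjab⟩
        have hub : (u, b) ∈ A.unl := by
          rcases hu.1 with h | ⟨x, hx, _⟩
          · exact h
          · exact absurd hx (cond.2.2.2.1 x)
        have hvb : (v, b) ∈ A.unl := by
          rcases hu.2 with h | ⟨x, hx, _⟩
          · exact h
          · exact absurd hx (cond.2.2.2.2.1 x)
        rcases (hP _ hub).1 with ⟨t, ht⟩ | hnu
        · exact Or.inl ⟨t, Or.inl ht⟩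
        rcases (hP _ hvb).1 with ⟨t, ht⟩ | hnv
        · exact Or.inl ⟨t, Or.inr ht⟩
        exact Or.inr ⟨hnu, hnv⟩
      rcases key with ⟨t, ht⟩ | ⟨hnu, hnv⟩
      · refine Or.inl ⟨t, ?_⟩
        show mergeV u v (A.En t) = mergeV u v a
        rw [mergeV_fmem ht, mergeV_fmem hav]
      · refine Or.inr fun p hp => ?_
        obtain ⟨p₁, q₁, hpq, hp₁, hq₁⟩ := merge_adj_bwd hp
        have hq₁u : q₁ = u ∨ q₁ = v := by
          apply mergeV_eq_u (v := v)
          rw [hq₁, mergeV_fmem hav]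
        rcases hq₁u with h | h <;> rw [h] at hpq
        · exact hnu p₁ hpq
        · exact hnv p₁ hpq
    · push_neg at hav
      rcases (hP _ hab).1 with ⟨t, ht⟩ | hn
      · exact Or.inl ⟨t, by show mergeV u v (A.En t) = mergeV u v a; rw [ht]⟩
      · refine Or.inr fun p hp => ?_
        obtain ⟨p₁, q₁, hpq, hp₁, hq₁⟩ := merge_adj_bwd hp
        have : q₁ = a := by
          rcases mergeV_fiber hq₁ with h | ⟨_, h2⟩
          · exact h
          · rcases h2 with h2 | h2
            · exact absurd h2 hav.1
            · exact absurd h2 hav.2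
        rw [this] at hpq
        exact hn p₁ hpq
  · -- GoodHead
    show GoodHead (A.merge u v) (mergeV u v b)
    rcases (hP _ hab).2 with ⟨t, ht⟩ | hn
    · exact Or.inl ⟨t, by show mergeV u v (A.St t) = mergeV u v b; rw [ht]⟩
    · by_cases hbv : b = u ∨ b = v
      · have hno : (∀ p, ¬ A.adj u p) ∧ (∀ p, ¬ A.adj v p) := by
          constructor
          · intro p hp
            rcases hbv with h | h
            · exact hn p (h ▸ hp)
            · exact hn p (h ▸ (h6 p).1 hp)
          · intro p hp
            rcases hbv with h | h
            · exact hn p (h ▸ (h6 p).2 hp)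
            · exact hn p (h ▸ hp)
        refine Or.inr fun p hp => ?_
        obtain ⟨p₁, q₁, hpq, hp₁, hq₁⟩ := merge_adj_bwd hp
        have hp₁u : p₁ = u ∨ p₁ = v := by
          apply mergeV_eq_u (v := v)
          rw [hp₁, mergeV_fmem hbv]
        rcases hp₁u with h | h <;> rw [h] at hpq
        · exact hno.1 q₁ hpq
        · exact hno.2 q₁ hpq
      · push_neg at hbv
        refine Or.inr fun p hp => ?_
        obtain ⟨p₁, q₁, hpq, hp₁, hq₁⟩ := merge_adj_bwd hp
        have : p₁ = b := by
          rcases mergeV_fiber hp₁ with h | ⟨_, h2⟩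
          · exact h
          · rcases h2 with h2 | h2
            · exact absurd h2 hbv.1
            · exact absurd h2 hbv.2
        rw [this] at hpq
        exact hn q₁ hpq

lemma rule1in_P4 {A : AOE V T} {u v : V} (cond : Rule1InCond A u v) (hP : P4 A) :
    P4 (A.merge u v) := by
  have h6 := cond.2.2.2.2.2
  intro e he
  obtain ⟨a, b, hab, rfl⟩ := merge_unl_bwd he
  constructor
  · -- GoodTail
    show GoodTail (A.merge u v) (mergeV u v a)
    rcases (hP _ hab).1 with ⟨t, ht⟩ | hn
    · exact Or.inl ⟨t, by show mergeV u v (A.En t) = mergeV u v a; rw [ht]⟩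
    · by_cases hav : a = u ∨ a = v
      · have hno : (∀ p, ¬ A.adj p u) ∧ (∀ p, ¬ A.adj p v) := by
          constructor
          · intro p hp
            rcases hav with h | h
            · exact hn p (h ▸ hp)
            · exact hn p (h ▸ (h6 p).1 hp)
          · intro p hp
            rcases hav with h | h
            · exact hn p (h ▸ (h6 p).2 hp)
            · exact hn p (h ▸ hp)
        refine Or.inr fun p hp => ?_
        obtain ⟨p₁, q₁, hpq, hp₁, hq₁⟩ := merge_adj_bwd hp
        have hq₁u : q₁ = u ∨ q₁ = v := by
          apply mergeV_eq_u (v := v)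
          rw [hq₁, mergeV_fmem hav]
        rcases hq₁u with h | h <;> rw [h] at hpq
        · exact hno.1 p₁ hpq
        · exact hno.2 p₁ hpq
      · push_neg at hav
        refine Or.inr fun p hp => ?_
        obtain ⟨p₁, q₁, hpq, hp₁, hq₁⟩ := merge_adj_bwd hp
        have : q₁ = a := by
          rcases mergeV_fiber hq₁ with h | ⟨_, h2⟩
          · exact h
          · rcases h2 with h2 | h2
            · exact absurd h2 hav.1
            · exact absurd h2 hav.2
        rw [this] at hpq
        exact hn p₁ hpq
  · -- GoodHead
    show GoodHead (A.merge u v) (mergeV u v b)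
    by_cases hbv : b = u ∨ b = v
    · have hadjab : A.adj a b := Or.inl hab
      have key : (∃ t, A.St t = u ∨ A.St t = v) ∨
          ((∀ p, ¬ A.adj u p) ∧ (∀ p, ¬ A.adj v p)) := by
        have hu : A.adj a u ∧ A.adj a v := by
          rcases hbv with h | h <;> rw [h] at hadjab
          · exact ⟨hadjab, (h6 a).1 hadjab⟩
          · exact ⟨(h6 a).2 hadjab, hadjab⟩
        have hau : (a, u) ∈ A.unl := by
          rcases hu.1 with h | ⟨x, _, hx⟩
          · exact h
          · exact absurd hx (cond.2.2.2.1 x)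
        have hav2 : (a, v) ∈ A.unl := by
          rcases hu.2 with h | ⟨x, _, hx⟩
          · exact h
          · exact absurd hx (cond.2.2.2.2.1 x)
        rcases (hP _ hau).2 with ⟨t, ht⟩ | hnu
        · exact Or.inl ⟨t, Or.inl ht⟩
        rcases (hP _ hav2).2 with ⟨t, ht⟩ | hnv
        · exact Or.inl ⟨t, Or.inr ht⟩
        exact Or.inr ⟨hnu, hnv⟩
      rcases key with ⟨t, ht⟩ | ⟨hnu, hnv⟩
      · refine Or.inl ⟨t, ?_⟩
        show mergeV u v (A.St t) = mergeV u v b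
        rw [mergeV_fmem ht, mergeV_fmem hbv]
      · refine Or.inr fun p hp => ?_
        obtain ⟨p₁, q₁, hpq, hp₁, hq₁⟩ := merge_adj_bwd hp
        have hp₁u : p₁ = u ∨ p₁ = v := by
          apply mergeV_eq_u (v := v)
          rw [hp₁, mergeV_fmem hbv]
        rcases hp₁u with h | h <;> rw [h] at hpq
        · exact hnu q₁ hpq
        · exact hnv q₁ hpq
    · push_neg at hbv
      rcases (hP _ hab).2 with ⟨t, ht⟩ | hn
      · exact Or.inl ⟨t, by show mergeV u v (A.St t) = mergeV u v b; rw [ht]⟩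
      · refine Or.inr fun p hp => ?_
        obtain ⟨p₁, q₁, hpq, hp₁, hq₁⟩ := merge_adj_bwd hp
        have : p₁ = b := by
          rcases mergeV_fiber hp₁ with h | ⟨_, h2⟩
          · exact h
          · rcases h2 with h2 | h2
            · exact absurd h2 hbv.1
            · exact absurd h2 hbv.2
        rw [this] at hpq
        exact hn q₁ hpq

lemma rule3_P4 {A : AOE V T} {u v : V} (hA : A.Acyclic) (cond : Rule3Cond A u v)
    (hP : P4 A)
    (hς : ∃ s ∈ A.verts, ∀ x ∈ A.verts, ReflTransGen A.adj s x)
    (hη : ∃ e ∈ A.verts, ∀ x ∈ A.verts, ReflTransGen A.adj x e) :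
    P4 ((A.delUnl u v).merge u v) := by
  have hedge : A.adj u v := Or.inl cond.1
  have hi := cond.2.1
  have humem : u ∈ A.verts := (A.unlMem _ cond.1).1
  have hvmem : v ∈ A.verts := (A.unlMem _ cond.1).2
  intro e he
  obtain ⟨a, b, hab, rfl⟩ := merge_unl_bwd (A := A.delUnl u v) he
  have habA : (a, b) ∈ A.unl := Multiset.mem_of_mem_erase hab
  constructor
  · -- GoodTail
    show GoodTail ((A.delUnl u v).merge u v) (mergeV u v a)
    by_cases hav : a = v
    · rcases (hP _ habA).1 with ⟨t, ht⟩ | hn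
      · exact Or.inl ⟨t, by show mergeV u v (A.En t) = mergeV u v a; rw [ht]⟩
      · exact absurd hedge (hav ▸ hn u)
    · by_cases hau : a = u
      · rcases (hP _ habA).1 with ⟨t, ht⟩ | hn
        · exact Or.inl ⟨t, by show mergeV u v (A.En t) = mergeV u v a; rw [ht]⟩
        · by_cases hEnv : ∃ y, A.En y = v
          · obtain ⟨y, hy⟩ := hEnv
            refine Or.inl ⟨y, ?_⟩
            show mergeV u v (A.En y) = mergeV u v a
            rw [hy, hau, mergeV_v, mergeV_self]
          · refine Or.inr fun p hp => ?_
            obtain ⟨p₁, q₁, hpq, hp₁, hq₁⟩ := merge_adj_bwd hp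
            have hq₁u : q₁ = u ∨ q₁ = v := by
              apply mergeV_eq_u (v := v)
              rw [hq₁, hau, mergeV_self]
            rcases hq₁u with h | h
            · rw [h] at hpq
              exact hn p₁ (hau ▸ delUnl_adj_sub hpq)
            · rw [h] at hpq
              rcases hpq with hpq | ⟨y, _, hy⟩
              · -- (p₁, v) ∈ erase
                have hp₁u : p₁ ≠ u := by
                  rintro rfl; exact rule3_no_dup cond hpq
                obtain ⟨s, hs, hreach⟩ := hς
                have hsu : s = u := by
                  rcases (hreach u humem).cases_tail with he' | ⟨c, _, hcu⟩
                  · exact he'.symm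
                  · exact absurd hcu (hau ▸ hn c)
                have hp₁mem : p₁ ∈ A.verts :=
                  (A.unlMem _ (Multiset.mem_of_mem_erase hpq)).1
                have h2 : ReflTransGen A.adj u p₁ := hsu ▸ hreach p₁ hp₁mem
                rcases avoidSplit A u v h2 with h2' | ⟨_, hvp⟩
                · exact hi (TransGen.tail' h2' (Or.inl hpq))
                · exact hA v (TransGen.tail' hvp (Or.inl (Multiset.mem_of_mem_erase hpq)))
              · exact hEnv ⟨y, hy⟩
      · -- a ∉ {u, v}
        rcases (hP _ habA).1 with ⟨t, ht⟩ | hn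
        · exact Or.inl ⟨t, by show mergeV u v (A.En t) = mergeV u v a; rw [ht]⟩
        · refine Or.inr fun p hp => ?_
          obtain ⟨p₁, q₁, hpq, hp₁, hq₁⟩ := merge_adj_bwd hp
          have : q₁ = a := by
            rcases mergeV_fiber hq₁ with h | ⟨_, h2⟩
            · exact h
            · rcases h2 with h2 | h2
              · exact absurd h2 hau
              · exact absurd h2 hav
          rw [this] at hpq
          exact hn p₁ (delUnl_adj_sub hpq)
  · -- GoodHead
    show GoodHead ((A.delUnl u v).merge u v) (mergeV u v b)
    by_cases hbu : b = u
    · rcases (hP _ habA).2 with ⟨t, ht⟩ | hn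
      · exact Or.inl ⟨t, by show mergeV u v (A.St t) = mergeV u v b; rw [ht]⟩
      · exact absurd hedge (hbu ▸ hn v)
    · by_cases hbv : b = v
      · rcases (hP _ habA).2 with ⟨t, ht⟩ | hn
        · exact Or.inl ⟨t, by show mergeV u v (A.St t) = mergeV u v b; rw [ht]⟩
        · by_cases hStu : ∃ x, A.St x = u
          · obtain ⟨x, hx⟩ := hStu
            refine Or.inl ⟨x, ?_⟩
            show mergeV u v (A.St x) = mergeV u v b
            rw [hx, hbv, mergeV_v, mergeV_self]
          · refine Or.inr fun p hp => ?_
            obtain ⟨p₁, q₁, hpq, hp₁, hq₁⟩ := merge_adj_bwd hp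
            have hp₁u : p₁ = u ∨ p₁ = v := by
              apply mergeV_eq_u (v := v)
              rw [hp₁, hbv, mergeV_v]
            rcases hp₁u with h | h
            · rw [h] at hpq
              rcases hpq with hpq | ⟨x, hx, _⟩
              · have hq₁v : q₁ ≠ v := by
                  rintro rfl; exact rule3_no_dup cond hpq
                obtain ⟨e₀, he₀, hreach'⟩ := hη
                have hev : e₀ = v := by
                  rcases (hreach' v hvmem).cases_head with he' | ⟨c, hvc, _⟩
                  · exact he'.symm
                  · exact absurd hvc (hbv ▸ hn c)
                have hq₁mem : q₁ ∈ A.verts :=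
                  (A.unlMem _ (Multiset.mem_of_mem_erase hpq)).2
                have h2 : ReflTransGen A.adj q₁ v := hev ▸ hreach' q₁ hq₁mem
                rcases avoidSplit A u v h2 with h2' | ⟨hqu, _⟩
                · exact hi (TransGen.head' (Or.inl hpq) h2')
                · exact hA u (TransGen.head' (Or.inl (Multiset.mem_of_mem_erase hpq)) hqu)
              · exact hStu ⟨x, hx⟩
            · rw [h] at hpq
              exact hn q₁ (hbv ▸ delUnl_adj_sub hpq)
      · rcases (hP _ habA).2 with ⟨t, ht⟩ | hn
        · exact Or.inl ⟨t, by show mergeV u v (A.St t) = mergeV u v b; rw [ht]⟩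
        · refine Or.inr fun p hp => ?_
          obtain ⟨p₁, q₁, hpq, hp₁, hq₁⟩ := merge_adj_bwd hp
          have : p₁ = b := by
            rcases mergeV_fiber hp₁ with h | ⟨_, h2⟩
            · exact h
            · rcases h2 with h2 | h2
              · exact absurd h2 hbu
              · exact absurd h2 hbv
          rw [this] at hpq
          exact hn q₁ (delUnl_adj_sub hpq)

end Statement14Proof4
section Statement14Proof5

open Relation

variable {V T : Type} [DecidableEq V]

lemma rule3_step_fwd {A : AOE V T} {u v a b : V} (hab : A.adj a b) :
    ReflTransGen ((A.delUnl u v).merge u v).adj (mergeV u v a) (mergeV u v b) := by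
  rcases step_split u v hab with hs | ⟨rfl, rfl⟩
  · exact ReflTransGen.single (merge_adj_fwd (A := A.delUnl u v) hs)
  · rw [mergeV_self, mergeV_v]

/-- The bundle `Mstar` holds in `A` for a pair newly merged by Rule 3. -/
lemma rule3_new_Mstar {A : AOE V T} (hA : A.Acyclic) {u v : V} (cond : Rule3Cond A u v)
    {a b : T} (hEa : A.En a = u) (hSb : A.St b = v) : Mstar A a b := by
  have hedge : A.adj u v := Or.inl cond.1
  have hi := cond.2.1
  refine ⟨?_, ?_, ?_, ?_⟩
  · rintro rfl
    exact hA v (TransGen.head' (Or.inr ⟨a, hSb, hEa⟩) (ReflTransGen.single hedge))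
  · show ReflTransGen A.adj (A.En a) (A.St b)
    rw [hEa, hSb]; exact ReflTransGen.single hedge
  · rintro ⟨c, _, _, h1, h2⟩
    have h1' : ReflTransGen A.adj u (A.St c) := hEa ▸ h1
    have h2' : ReflTransGen A.adj (A.En c) v := hSb ▸ h2
    exact hi (W3 hA h1' h2')
  · intro w z h1 h2
    have h1' : ReflTransGen A.adj (A.En w) v := hSb ▸ h1
    have h2' : ReflTransGen A.adj u (A.St z) := hEa ▸ h2
    show ReflTransGen A.adj (A.En w) (A.St z)
    by_cases hwv : A.En w = v
    · obtain ⟨hStu, hout⟩ := cond.2.2.2.1 ⟨w, hwv⟩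
      rcases h2'.cases_head with he | ⟨z₀, hz, hzs⟩
      · exact absurd he.symm (hStu z)
      · have hz₀ : z₀ = v := by
          rcases hz with hz | ⟨x, hx, _⟩
          · exact hout z₀ hz
          · exact absurd hx (hStu x)
        rw [hwv, ← hz₀]; exact hzs
    · rcases h1'.cases_tail with he | ⟨c, hc, hcv⟩
      · exact absurd he.symm hwv
      · rcases h2'.cases_head with he | ⟨z₀, hz, hzs⟩
        · rw [← he]
          exact rule3_H1 cond ⟨z, he.symm⟩ ⟨w, rfl⟩ h1'
        · exact hc.trans ((cond.2.2.2.2 c z₀ hcv hz).trans hzs)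

lemma step_reach_iff {A B : AOE V T} (hA : A.Acyclic) (hs : Step A B) (t t' : T) :
    A.reach t t' ↔ B.reach t t' := by
  cases hs with
  | rule1out u v cond => exact rule1out_reach_iff cond t t'
  | rule1in u v cond => exact rule1in_reach_iff cond t t'
  | rule2 u v cond => exact rule2_reach_iff cond t t'
  | rule3 u v cond => exact ⟨rule3_reach_fwd t t', fun h => rule3_reach_bwd hA cond h⟩

lemma step_acyclic {A B : AOE V T} (hA : A.Acyclic) (hs : Step A B) : B.Acyclic := by
  cases hs with
  | rule1out u v cond => exact rule1out_acyclic hA cond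
  | rule1in u v cond => exact rule1in_acyclic hA cond
  | rule2 u v cond => exact rule2_acyclic hA u v
  | rule3 u v cond => exact rule3_acyclic hA cond

lemma P7_merge {A B : AOE V T} {u v : V} (humem : u ∈ A.verts)
    (hfwd : ∀ a b, A.adj a b → ReflTransGen B.adj (mergeV u v a) (mergeV u v b))
    (hverts : B.verts = insert u (A.verts.erase v))
    (h : ∃ s ∈ A.verts, ∀ x ∈ A.verts, ReflTransGen A.adj s x) :
    ∃ s ∈ B.verts, ∀ x ∈ B.verts, ReflTransGen B.adj s x := by
  obtain ⟨s, hs, hr⟩ := h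
  refine ⟨mergeV u v s, ?_, ?_⟩
  · rw [hverts]; exact mergeV_mem u v s hs
  · intro x hx
    rw [hverts] at hx
    rcases Finset.mem_insert.1 hx with hxu | hx
    · have := rtg_lift_f (mergeV u v) hfwd (hr u humem)
      rw [mergeV_self] at this
      rw [hxu]
      exact this
    · obtain ⟨hxv, hxm⟩ := Finset.mem_erase.1 hx
      have := rtg_lift_f (mergeV u v) hfwd (hr x hxm)
      rwa [mergeV_ne u hxv] at this

lemma P7'_merge {A B : AOE V T} {u v : V} (humem : u ∈ A.verts)
    (hfwd : ∀ a b, A.adj a b → ReflTransGen B.adj (mergeV u v a) (mergeV u v b))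
    (hverts : B.verts = insert u (A.verts.erase v))
    (h : ∃ e ∈ A.verts, ∀ x ∈ A.verts, ReflTransGen A.adj x e) :
    ∃ e ∈ B.verts, ∀ x ∈ B.verts, ReflTransGen B.adj x e := by
  obtain ⟨s, hs, hr⟩ := h
  refine ⟨mergeV u v s, ?_, ?_⟩
  · rw [hverts]; exact mergeV_mem u v s hs
  · intro x hx
    rw [hverts] at hx
    rcases Finset.mem_insert.1 hx with hxu | hx
    · have := rtg_lift_f (mergeV u v) hfwd (hr u humem)
      rw [mergeV_self] at this
      rw [hxu]
      exact this
    · obtain ⟨hxv, hxm⟩ := Finset.mem_erase.1 hx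
      have := rtg_lift_f (mergeV u v) hfwd (hr x hxm)
      rwa [mergeV_ne u hxv] at this

lemma step_inv {A B : AOE V T} (hs : Step A B) (hI : Inv A) :
    Inv B ∧ ∀ t t', A.reach t t' ↔ B.reach t t' := by
  obtain ⟨hA, hP4, hM, hP7, hP7'⟩ := hI
  have hreach := step_reach_iff hA hs
  have hacy := step_acyclic hA hs
  refine ⟨⟨hacy, ?_, ?_, ?_, ?_⟩, hreach⟩
  · -- P4
    cases hs with
    | rule1out u v cond => exact rule1out_P4 cond hP4
    | rule1in u v cond => exact rule1in_P4 cond hP4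
    | rule2 u v cond => exact rule2_P4 hP4
    | rule3 u v cond => exact rule3_P4 hA cond hP4 hP7 hP7'
  · -- Mstar coincidences
    cases hs with
    | rule1out u v cond =>
      intro a b hab
      have hab' : mergeV u v (A.En a) = mergeV u v (A.St b) := hab
      have : A.En a = A.St b := by
        rcases mergeV_fiber hab' with h | ⟨_, h2⟩
        · exact h
        · rcases h2 with h2 | h2
          · exact absurd h2 (cond.2.2.2.1 b)
          · exact absurd h2 (cond.2.2.2.2.1 b)
      exact (mstar_transfer hreach a b).1 (hM a b this)
    | rule1in u v cond =>
      intro a b hab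
      have hab' : mergeV u v (A.En a) = mergeV u v (A.St b) := hab
      have : A.En a = A.St b := by
        rcases mergeV_fiber hab' with h | ⟨h2, _⟩
        · exact h
        · rcases h2 with h2 | h2
          · exact absurd h2 (cond.2.2.2.1 a)
          · exact absurd h2 (cond.2.2.2.2.1 a)
      exact (mstar_transfer hreach a b).1 (hM a b this)
    | rule2 u v cond =>
      intro a b hab
      exact (mstar_transfer hreach a b).1 (hM a b hab)
    | rule3 u v cond =>
      intro a b hab
      have hab' : mergeV u v (A.En a) = mergeV u v (A.St b) := hab
      refine (mstar_transfer hreach a b).1 ?_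
      rcases mergeV_fiber hab' with h | ⟨h1, h2⟩
      · exact hM a b h
      · rcases h1 with h1 | h1 <;> rcases h2 with h2 | h2
        · exact hM a b (h1.trans h2.symm)
        · exact rule3_new_Mstar hA cond h1 h2
        · exact absurd h1 ((cond.2.2.1 ⟨b, h2⟩).1 a)
        · exact hM a b (h1.trans h2.symm)
  · -- source
    cases hs with
    | rule1out u v cond =>
      exact P7_merge cond.1 (fun a b hab => ReflTransGen.single (merge_adj_fwd hab)) rfl hP7
    | rule1in u v cond =>
      exact P7_merge cond.1 (fun a b hab => ReflTransGen.single (merge_adj_fwd hab)) rfl hP7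
    | rule2 u v cond =>
      obtain ⟨s, hs', hr⟩ := hP7
      exact ⟨s, hs', fun x hx => rtg_lift_id (fun a b hab => rule2_adj_rtg cond hab) (hr x hx)⟩
    | rule3 u v cond =>
      exact P7_merge (A.unlMem _ cond.1).1 (fun a b hab => rule3_step_fwd hab) rfl hP7
  · -- sink
    cases hs with
    | rule1out u v cond =>
      exact P7'_merge cond.1 (fun a b hab => ReflTransGen.single (merge_adj_fwd hab)) rfl hP7'
    | rule1in u v cond =>
      exact P7'_merge cond.1 (fun a b hab => ReflTransGen.single (merge_adj_fwd hab)) rfl hP7'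
    | rule2 u v cond =>
      obtain ⟨s, hs', hr⟩ := hP7'
      exact ⟨s, hs', fun x hx => rtg_lift_id (fun a b hab => rule2_adj_rtg cond hab) (hr x hx)⟩
    | rule3 u v cond =>
      exact P7'_merge (A.unlMem _ cond.1).1 (fun a b hab => rule3_step_fwd hab) rfl hP7'

lemma rtgStep_inv {G A : AOE V T} (h : ReflTransGen Step G A) (hI : Inv G) :
    Inv A ∧ ∀ t t', G.reach t t' ↔ A.reach t t' := by
  induction h with
  | refl => exact ⟨hI, fun t t' => Iff.rfl⟩
  | tail _ hbc ih =>
    obtain ⟨hIb, hiff⟩ := ih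
    obtain ⟨hIc, hiff'⟩ := step_inv hbc hIb
    exact ⟨hIc, fun t t' => (hiff t t').trans (hiff' t t')⟩

end Statement14Proof5
section Statement14Proof6

open Relation

variable {V T : Type} [DecidableEq V] [Fintype T]

lemma canonical_inv {G : AOE V T} (hC : Canonical G) : Inv G := by
  classical
  obtain ⟨hAcy, _, _, _, hStEn, s, e, hse, hsmem, hemem, hTask, hverts, hstruct, hsiff, heiff⟩ := hC
  have vert_cases : ∀ x ∈ G.verts,
      x = s ∨ x = e ∨ (∃ t, G.St t = x) ∨ (∃ t, G.En t = x) := by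
    intro x hx
    rw [hverts] at hx
    rcases Finset.mem_insert.1 hx with h | hx
    · exact Or.inl h
    rcases Finset.mem_insert.1 hx with h | hx
    · exact Or.inr (Or.inl h)
    rcases Finset.mem_union.1 hx with h | h
    · obtain ⟨t, _, ht⟩ := Finset.mem_image.1 h
      exact Or.inr (Or.inr (Or.inl ⟨t, ht⟩))
    · obtain ⟨t, _, ht⟩ := Finset.mem_image.1 h
      exact Or.inr (Or.inr (Or.inr ⟨t, ht⟩))
  have no_in_s : ∀ a, ¬ G.adj a s := by
    rintro a (h | ⟨t, _, ht⟩)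
    · by_cases has : a = s
      · rw [has] at h
        exact ((hsiff s).1 h).2.1 rfl
      · by_cases hes : s = e
        · exact hse hes
        · obtain ⟨_, t', ht'⟩ := hstruct a s h has hes
          exact (hTask t').1 ht'
    · exact (hTask t).2.2.1 ht
  have no_out_e : ∀ b, ¬ G.adj e b := by
    rintro b (h | ⟨t, ht, _⟩)
    · by_cases hbe : b = e
      · rw [hbe] at h
        exact ((heiff e).1 h).2.1 rfl
      · obtain ⟨⟨t, ht⟩, _⟩ := hstruct e b h (Ne.symm hse) hbe
        exact (hTask t).2.2.2 ht
    · exact (hTask t).2.1 ht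
  have in_adj : ∀ x ∈ G.verts, x ≠ s → ∃ y, G.adj y x := by
    intro x hx hxs
    rcases vert_cases x hx with h | h | ⟨t, ht⟩ | ⟨t, ht⟩
    · exact absurd h hxs
    · rw [h]
      by_cases hex : ∃ a, (a, e) ∈ G.unl
      · obtain ⟨a, ha⟩ := hex
        exact ⟨a, Or.inl ha⟩
      · push_neg at hex
        refine absurd ((hsiff e).2 ⟨hemem, Ne.symm hse, fun t => (hTask t).2.2.2, ?_⟩) (hex s)
        intro a ha
        exact absurd ha (hex a)
    · subst ht
      by_cases hex : ∃ a, (a, G.St t) ∈ G.unl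
      · obtain ⟨a, ha⟩ := hex
        exact ⟨a, Or.inl ha⟩
      · push_neg at hex
        refine absurd ((hsiff (G.St t)).2 ⟨G.stMem t, (hTask t).1, ?_, ?_⟩) (hex s)
        · exact fun t' h => (hStEn t t') h.symm
        · intro a ha
          exact absurd ha (hex a)
    · exact ⟨G.St t, Or.inr ⟨t, rfl, ht⟩⟩
  have out_adj : ∀ x ∈ G.verts, x ≠ e → ∃ y, G.adj x y := by
    intro x hx hxe
    rcases vert_cases x hx with h | h | ⟨t, ht⟩ | ⟨t, ht⟩
    · rw [h]
      by_cases hex : ∃ b, (s, b) ∈ G.unl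
      · obtain ⟨b, hb⟩ := hex
        exact ⟨b, Or.inl hb⟩
      · push_neg at hex
        exfalso
        by_cases hT : Nonempty T
        · -- every task start has a non-s unlabeled in-edge; descend
          have hpred : ∀ t : T, ∃ a, (a, G.St t) ∈ G.unl ∧ a ≠ s := by
            intro t
            by_contra hno
            push_neg at hno
            exact hex (G.St t) ((hsiff (G.St t)).2 ⟨G.stMem t, (hTask t).1,
              fun t' h => (hStEn t t') h.symm, hno⟩)
          have hS : (Finset.univ.image G.St : Finset V) = ∅ := by
            refine FIN (TransGen G.adj)
              (fun x hx => hAcy x ((Relation.transGen_idem (r := G.adj)) ▸ hx)) _ ?_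
            intro x hxS
            obtain ⟨t, _, ht⟩ := Finset.mem_image.1 hxS
            obtain ⟨a, ha, has⟩ := hpred t
            have hae : G.St t ≠ e := (hTask t).2.1
            obtain ⟨⟨t₂, ht₂⟩, _⟩ := hstruct a (G.St t) ha has hae
            refine ⟨G.St t₂, Finset.mem_image.2 ⟨t₂, Finset.mem_univ t₂, rfl⟩, ?_⟩
            rw [← ht]
            exact TransGen.head' (Or.inr ⟨t₂, rfl, rfl⟩) (ReflTransGen.single (Or.inl (ht₂ ▸ ha)))
          obtain ⟨t⟩ := hT
          have : G.St t ∈ (Finset.univ.image G.St : Finset V) :=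
            Finset.mem_image.2 ⟨t, Finset.mem_univ t, rfl⟩
          rw [hS] at this
          exact absurd this (Finset.notMem_empty _)
        · -- T empty: (s, e) ∈ unl
          refine hex e ((hsiff e).2 ⟨hemem, Ne.symm hse, fun t => absurd ⟨t⟩ hT, ?_⟩)
          intro a ha
          obtain ⟨hamem, hane, _, _⟩ := (heiff a).1 ha
          rcases vert_cases a hamem with h | h | ⟨t, _⟩ | ⟨t, _⟩
          · exact h
          · exact absurd h hane
          · exact absurd ⟨t⟩ hT
          · exact absurd ⟨t⟩ hT
    · exact absurd h hxe
    · exact ⟨G.En t, Or.inr ⟨t, ht, rfl⟩⟩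
    · subst ht
      by_cases hex : ∃ b, (G.En t, b) ∈ G.unl
      · obtain ⟨b, hb⟩ := hex
        exact ⟨b, Or.inl hb⟩
      · push_neg at hex
        refine absurd ((heiff (G.En t)).2 ⟨G.enMem t, (hTask t).2.2.2, fun t' => hStEn t' t, ?_⟩)
          (hex e)
        intro b hb
        exact absurd hb (hex b)
  refine ⟨hAcy, ?_, ?_, ?_, ?_⟩
  · -- P4
    rintro ⟨a, b⟩ he'
    constructor
    · show GoodTail G a
      by_cases has : a = s
      · exact Or.inr fun x hx => no_in_s x (has ▸ hx)
      · by_cases hbe : b = e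
        · rw [hbe] at he'
          obtain ⟨hamem, hane, hsta, _⟩ := (heiff a).1 he'
          rcases vert_cases a hamem with h | h | ⟨t, ht⟩ | ⟨t, ht⟩
          · exact absurd h has
          · exact absurd h hane
          · exact absurd ht (hsta t)
          · exact Or.inl ⟨t, ht⟩
        · exact Or.inl (hstruct a b he' has hbe).1
    · show GoodHead G b
      by_cases hbe : b = e
      · exact Or.inr fun x hx => no_out_e x (hbe ▸ hx)
      · by_cases has : a = s
        · rw [has] at he'
          obtain ⟨hbmem, hbs, hEnb, _⟩ := (hsiff b).1 he'
          rcases vert_cases b hbmem with h | h | ⟨t, ht⟩ | ⟨t, ht⟩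
          · exact absurd h hbs
          · exact absurd h hbe
          · exact Or.inl ⟨t, ht⟩
          · exact absurd ht (hEnb t)
        · exact Or.inl (hstruct a b he' has hbe).2
  · -- no coincidences
    intro a b h
    exact absurd h.symm (hStEn b a)
  · -- source
    refine ⟨s, hsmem, ?_⟩
    intro x hx
    by_contra hnr
    have hS : (G.verts.filter (fun x => ¬ ReflTransGen G.adj s x)) = ∅ := by
      refine FIN G.adj hAcy _ ?_
      intro z hz
      obtain ⟨hzm, hznr⟩ := Finset.mem_filter.1 hz
      have hzs : z ≠ s := by rintro rfl; exact hznr ReflTransGen.refl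
      obtain ⟨y, hy⟩ := in_adj z hzm hzs
      refine ⟨y, Finset.mem_filter.2 ⟨(G.adj_mem hy).1, fun hc => hznr (hc.tail hy)⟩, hy⟩
    have : x ∈ G.verts.filter (fun x => ¬ ReflTransGen G.adj s x) :=
      Finset.mem_filter.2 ⟨hx, hnr⟩
    rw [hS] at this
    exact absurd this (Finset.notMem_empty _)
  · -- sink
    refine ⟨e, hemem, ?_⟩
    intro x hx
    by_contra hnr
    have hS : (G.verts.filter (fun x => ¬ ReflTransGen G.adj x e)) = ∅ := by
      refine FIN (fun a b => G.adj b a) (fun x hx => hAcy x (transGen_swap.1 hx)) _ ?_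
      intro z hz
      obtain ⟨hzm, hznr⟩ := Finset.mem_filter.1 hz
      have hze : z ≠ e := by rintro rfl; exact hznr ReflTransGen.refl
      obtain ⟨y, hy⟩ := out_adj z hzm hze
      refine ⟨y, Finset.mem_filter.2 ⟨(G.adj_mem hy).2, fun hc => hznr (ReflTransGen.head hy hc)⟩, hy⟩
    have : x ∈ G.verts.filter (fun x => ¬ ReflTransGen G.adj x e) :=
      Finset.mem_filter.2 ⟨hx, hnr⟩
    rw [hS] at this
    exact absurd this (Finset.notMem_empty _)

end Statement14Proof6
section Statement14Proof7

open Relation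

variable {V T : Type} [DecidableEq V]

/-- At a terminal graph, an unlabeled edge `(En t, St t')` implies `¬ Q1 t t'`. -/
lemma term_edge_notQ1 {A : AOE V T} (hI : Inv A) (hterm : ∀ B, ¬ Step A B) {t t' : T}
    (he : (A.En t, A.St t') ∈ A.unl) : ¬ Q1 A t t' := by
  obtain ⟨hA, hP4, hM, hP7, hP7'⟩ := hI
  intro hQ
  have hedge : A.adj (A.En t) (A.St t') := Or.inl he
  have huv : A.En t ≠ A.St t' := acyc_ne hA hedge
  have humem : A.En t ∈ A.verts := A.enMem t
  have hvmem : A.St t' ∈ A.verts := A.stMem t'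
  obtain ⟨s₀, hs₀, hrs⟩ := hP7
  obtain ⟨e₀, he₀, hre'⟩ := hP7'
  have hsrc : ∀ w, (∀ p, ¬ A.adj p w) → w ∈ A.verts →
      ∀ z ∈ A.verts, ReflTransGen A.adj w z := by
    intro w hno hw z hz
    have hsw : s₀ = w := by
      rcases (hrs w hw).cases_tail with h | ⟨c, _, hc⟩
      · exact h.symm
      · exact absurd hc (hno c)
    exact hsw ▸ hrs z hz
  have hsnk : ∀ z, (∀ p, ¬ A.adj z p) → z ∈ A.verts →
      ∀ w ∈ A.verts, ReflTransGen A.adj w z := by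
    intro z hno hz w hw
    have hez : e₀ = z := by
      rcases (hre' z hz).cases_head with h | ⟨c, hc, _⟩
      · exact h.symm
      · exact absurd hc (hno c)
    exact hez ▸ hre' w hw
  have noR2 : ∀ p q, (p, q) ∈ A.unl → ¬ TransGen (A.delUnl p q).adj p q :=
    fun p q h1 h2 => hterm _ (Step.rule2 p q ⟨h1, h2⟩)
  have hcond : Rule3Cond A (A.En t) (A.St t') := by
    refine ⟨he, noR2 _ _ he, ?_, ?_, ?_⟩
    · -- condition 3
      rintro ⟨x, hx⟩
      have hMx : Mstar A t x := hM t x hx.symm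
      constructor
      · intro y hy
        have hMy : Mstar A y t' := hM y t' hy
        have hr : A.reach y x := hQ y x hMy.2.1 hMx.2.1
        have hr' : ReflTransGen A.adj (A.St t') (A.En t) := by
          have := hr
          unfold AOE.reach at this
          rw [hy, hx] at this
          exact this
        exact hA (A.St t') (TransGen.tail' hr' hedge)
      · intro w hw
        by_contra hwu
        have hpath : ReflTransGen A.adj w (A.En t) := by
          rcases (hP4 _ hw).1 with ⟨tw, htw⟩ | hno
          · have h1 : A.reach tw t' :=
              ReflTransGen.single (Or.inl (by rw [htw]; exact hw))
            have hr := hQ tw x h1 hMx.2.1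
            unfold AOE.reach at hr
            rw [htw, hx] at hr
            exact hr
          · exact hsrc w hno (A.unlMem _ hw).1 (A.En t) humem
        exact noR2 w (A.St t') hw
          (W2 hA hpath (ReflTransGen.single hedge) (fun hc => hwu hc.symm) huv)
    · -- condition 4
      rintro ⟨y, hy⟩
      have hMy : Mstar A y t' := hM y t' hy
      constructor
      · intro x hx
        have hMx : Mstar A t x := hM t x hx.symm
        have hr : A.reach y x := hQ y x hMy.2.1 hMx.2.1
        have hr' : ReflTransGen A.adj (A.St t') (A.En t) := by
          unfold AOE.reach at hr
          rw [hy, hx] at hr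
          exact hr
        exact hA (A.St t') (TransGen.tail' hr' hedge)
      · intro z hz
        by_contra hzv
        have hpath : ReflTransGen A.adj (A.St t') z := by
          rcases (hP4 _ hz).2 with ⟨tz, htz⟩ | hno
          · have h2 : A.reach t tz :=
              ReflTransGen.single (Or.inl (by rw [htz]; exact hz))
            have hr := hQ y tz hMy.2.1 h2
            unfold AOE.reach at hr
            rw [hy, htz] at hr
            exact hr
          · exact hsnk z hno (A.unlMem _ hz).2 (A.St t') hvmem
        exact noR2 (A.En t) z hz
          (W2 hA (ReflTransGen.single hedge) hpath (Ne.symm huv) (fun hc => hzv hc.symm))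
    · -- condition (iv)
      intro w z hwv huz
      by_cases hwu : w = A.En t
      · rw [hwu]; exact ReflTransGen.single huz
      by_cases hzv : z = A.St t'
      · rw [hzv]; exact ReflTransGen.single hwv
      rcases hwv with hwv | ⟨y, hy1, hy2⟩
      · rcases (hP4 _ hwv).1 with ⟨tw, htw⟩ | hno
        · have h1 : A.reach tw t' :=
            ReflTransGen.single (Or.inl (by rw [htw]; exact hwv))
          rcases huz with huz' | ⟨x, hx1, hx2⟩
          · rcases (hP4 _ huz').2 with ⟨tz, htz⟩ | hno2
            · have h2 : A.reach t tz :=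
                ReflTransGen.single (Or.inl (by rw [htz]; exact huz'))
              have hr := hQ tw tz h1 h2
              unfold AOE.reach at hr
              rw [htw, htz] at hr
              exact hr
            · exact hsnk z hno2 (A.unlMem _ huz').2 w (A.unlMem _ hwv).1
          · have hr := hQ tw x h1 (hM t x hx1.symm).2.1
            unfold AOE.reach at hr
            rw [htw, hx1] at hr
            exact hr.tail (Or.inr ⟨x, hx1, hx2⟩)
        · exact hsrc w hno (A.unlMem _ hwv).1 z (A.adj_mem huz).2
      · have hMy : Mstar A y t' := hM y t' hy2
        rcases huz with huz' | ⟨x, hx1, hx2⟩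
        · rcases (hP4 _ huz').2 with ⟨tz, htz⟩ | hno2
          · have h2 : A.reach t tz :=
              ReflTransGen.single (Or.inl (by rw [htz]; exact huz'))
            have hr := hQ y tz hMy.2.1 h2
            unfold AOE.reach at hr
            rw [htz] at hr
            have hr2 : ReflTransGen A.adj (A.En y) z := hr
            exact ReflTransGen.head (Or.inr ⟨y, hy1, rfl⟩) hr2
          · exact hsnk z hno2 (A.unlMem _ huz').2 w (A.adj_mem (Or.inr ⟨y, hy1, hy2⟩)).1
        · exfalso
          have hr := hQ y x hMy.2.1 (hM t x hx1.symm).2.1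
          unfold AOE.reach at hr
          rw [hy2, hx1] at hr
          exact hA (A.St t') (TransGen.tail' hr hedge)
  exact hterm _ (Step.rule3 (A.En t) (A.St t') hcond)

lemma term_edge_basic {A : AOE V T} (hI : Inv A) (hterm : ∀ B, ¬ Step A B) {t t' : T}
    (he : (A.En t, A.St t') ∈ A.unl) : t ≠ t' ∧ A.reach t t' ∧ NoMid A t t' := by
  obtain ⟨hA, hP4, hM, hP7, hP7'⟩ := hI
  have hedge : A.adj (A.En t) (A.St t') := Or.inl he
  refine ⟨?_, ReflTransGen.single hedge, ?_⟩
  · rintro rfl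
    exact hA (A.St t) (TransGen.head' (Or.inr ⟨t, rfl, rfl⟩) (ReflTransGen.single hedge))
  · rintro ⟨c, _, _, h1, h2⟩
    exact hterm _ (Step.rule2 (A.En t) (A.St t') ⟨he, W3 hA h1 h2⟩)

/-- At a terminal graph, `Mstar` forces the merge coincidence. -/
lemma term_Mstar_merge {A : AOE V T} (hI : Inv A) (hterm : ∀ B, ¬ Step A B) {a b : T}
    (h : Mstar A a b) : A.En a = A.St b := by
  obtain ⟨hA, hP4, hM, hP7, hP7'⟩ := hI
  obtain ⟨hab, hre, hnm, hq1⟩ := h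
  by_contra hne
  have htg : TransGen A.adj (A.En a) (A.St b) := rtg_transGen hre hne
  obtain ⟨x₁, hstep, hrest⟩ := TransGen.head'_iff.mp htg
  rcases hstep with he1 | ⟨y, hy1, hy2⟩
  · by_cases hx₁ : x₁ = A.St b
    · rw [hx₁] at he1
      exact term_edge_notQ1 ⟨hA, hP4, hM, hP7, hP7'⟩ hterm he1 hq1
    · have hrest' : TransGen A.adj x₁ (A.St b) := rtg_transGen hrest hx₁
      obtain ⟨x₂, hstep2, hrest2⟩ := TransGen.head'_iff.mp hrest'
      rcases hstep2 with he2 | ⟨y, hy1, hy2⟩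
      · rcases (hP4 _ he1).2 with ⟨c, hc⟩ | hno
        · have hc : A.St c = x₁ := hc
          rcases (hP4 _ he2).1 with ⟨d, hd⟩ | hno2
          · have hd : A.En d = x₁ := hd
            have hMdc : Mstar A d c := hM d c (hd.trans hc.symm)
            have he1' : (A.En a, A.St c) ∈ A.unl := by rw [hc]; exact he1
            refine term_edge_notQ1 ⟨hA, hP4, hM, hP7, hP7'⟩ hterm he1' ?_
            intro w z hw hz
            have hdb : A.reach d b := by
              show ReflTransGen A.adj (A.En d) (A.St b)
              rw [hd]; exact hrest
            exact hq1 w z (hMdc.2.2.2 w b hw hdb) hz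
          · exact hno2 (A.En a) (Or.inl he1)
        · exact hno x₂ (Or.inl he2)
      · refine hnm ⟨y, ?_, ?_, ?_, ?_⟩
        · rintro rfl
          exact hA (A.En y) (TransGen.head' (Or.inl he1) (ReflTransGen.single (Or.inr ⟨y, hy1, rfl⟩)))
        · rintro rfl
          exact hx₁ hy1.symm
        · show ReflTransGen A.adj (A.En a) (A.St y)
          rw [hy1]; exact ReflTransGen.single (Or.inl he1)
        · show ReflTransGen A.adj (A.En y) (A.St b)
          rw [hy2]; exact hrest2
  · refine hnm ⟨y, ?_, ?_, ?_, ?_⟩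
    · rintro rfl
      exact hA (A.En y) (TransGen.single (Or.inr ⟨y, hy1, rfl⟩))
    · rintro rfl
      exact hne hy1.symm
    · show ReflTransGen A.adj (A.En a) (A.St y)
      rw [hy1]
    · show ReflTransGen A.adj (A.En y) (A.St b)
      rw [hy2]; exact hrest

/-- At a terminal graph, an unlabeled edge `(En t, St t')` excludes `Estar`-witnesses. -/
lemma term_edge_nowit {A : AOE V T} (hI : Inv A) (hterm : ∀ B, ¬ Step A B) {t t' : T}
    (he : (A.En t, A.St t') ∈ A.unl) :
    ¬ ∃ a b, Mstar A a b ∧ A.reach t b ∧ A.reach a t' ∧ ¬ Mstar A t b ∧ ¬ Mstar A a t' := by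
  rintro ⟨a, b, hMab, htb, hat', hntb, hnat'⟩
  obtain ⟨hA, hP4, hM, hP7, hP7'⟩ := hI
  have hm : A.En a = A.St b := term_Mstar_merge ⟨hA, hP4, hM, hP7, hP7'⟩ hterm hMab
  have hmu : A.St b ≠ A.En t := fun hc => hntb (hM t b hc.symm)
  have hmv : A.St b ≠ A.St t' := fun hc => hnat' (hM a t' (hm.trans hc))
  have h2 : ReflTransGen A.adj (A.St b) (A.St t') := by
    have := hat'
    unfold AOE.reach at this
    rw [hm] at this
    exact this
  exact hterm _ (Step.rule2 (A.En t) (A.St t') ⟨he, W2 hA htb h2 hmu hmv⟩)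

/-- Sufficiency: at a terminal graph, `Estar` forces the unlabeled edge. -/
lemma term_Estar_edge {A : AOE V T} (hI : Inv A) (hterm : ∀ B, ¬ Step A B) {t t' : T}
    (h : Estar A t t') : (A.En t, A.St t') ∈ A.unl := by
  obtain ⟨hne, hre, hnm, hnq, hnw⟩ := h
  obtain ⟨hA, hP4, hM, hP7, hP7'⟩ := hI
  have hMne : A.En t ≠ A.St t' := fun hc => hnq (hM t t' hc).2.2.2
  have htg : TransGen A.adj (A.En t) (A.St t') := rtg_transGen hre hMne
  obtain ⟨x₁, hstep, hrest⟩ := TransGen.head'_iff.mp htg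
  rcases hstep with he1 | ⟨y, hy1, hy2⟩
  · by_cases hx₁ : x₁ = A.St t'
    · rw [hx₁] at he1; exact he1
    · exfalso
      have hrest' : TransGen A.adj x₁ (A.St t') := rtg_transGen hrest hx₁
      obtain ⟨x₂, hstep2, hrest2⟩ := TransGen.head'_iff.mp hrest'
      rcases hstep2 with he2 | ⟨y, hy1, hy2⟩
      · rcases (hP4 _ he1).2 with ⟨c, hc⟩ | hno
        · have hc : A.St c = x₁ := hc
          rcases (hP4 _ he2).1 with ⟨d, hd⟩ | hno2
          · have hd : A.En d = x₁ := hd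
            have hMdc : Mstar A d c := hM d c (hd.trans hc.symm)
            refine hnw ⟨d, c, hMdc, ?_, ?_, ?_, ?_⟩
            · show ReflTransGen A.adj (A.En t) (A.St c)
              rw [hc]; exact ReflTransGen.single (Or.inl he1)
            · show ReflTransGen A.adj (A.En d) (A.St t')
              rw [hd]; exact hrest
            · intro hMc
              have := term_Mstar_merge ⟨hA, hP4, hM, hP7, hP7'⟩ hterm hMc
              rw [hc] at this
              exact acyc_ne hA (Or.inl he1) this
            · intro hMd
              have := term_Mstar_merge ⟨hA, hP4, hM, hP7, hP7'⟩ hterm hMd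
              rw [hd] at this
              exact hx₁ this
          · exact hno2 (A.En t) (Or.inl he1)
        · exact hno x₂ (Or.inl he2)
      · refine hnm ⟨y, ?_, ?_, ?_, ?_⟩
        · rintro rfl
          exact hA (A.En y) (TransGen.head' (Or.inl he1) (ReflTransGen.single (Or.inr ⟨y, hy1, rfl⟩)))
        · rintro rfl
          exact hx₁ hy1.symm
        · show ReflTransGen A.adj (A.En t) (A.St y)
          rw [hy1]; exact ReflTransGen.single (Or.inl he1)
        · show ReflTransGen A.adj (A.En y) (A.St t')
          rw [hy2]; exact hrest2
  · refine absurd ⟨y, ?_, ?_, ?_, ?_⟩ hnm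
    · rintro rfl
      exact hA (A.En y) (TransGen.single (Or.inr ⟨y, hy1, rfl⟩))
    · rintro rfl
      exact hMne hy1.symm
    · show ReflTransGen A.adj (A.En t) (A.St y)
      rw [hy1]
    · show ReflTransGen A.adj (A.En y) (A.St t')
      rw [hy2]; exact hrest

lemma term_edge_iff {A : AOE V T} (hI : Inv A) (hterm : ∀ B, ¬ Step A B) (t t' : T) :
    (A.En t, A.St t') ∈ A.unl ↔ Estar A t t' := by
  constructor
  · intro he
    obtain ⟨hne, hre, hnm⟩ := term_edge_basic hI hterm he
    exact ⟨hne, hre, hnm, term_edge_notQ1 hI hterm he, term_edge_nowit hI hterm he⟩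
  · exact term_Estar_edge hI hterm

end Statement14Proof7
/-- Any two output AOEs arising from the same canonical AOE have the same
unlabeled edges: if `(u, v)` is an unlabeled edge of `A₁` with `u = End(T)` and
`v = St(T')`, then `A₂` has an unlabeled edge from `End(T)` to `St(T')`. -/
theorem stmt14 {V T : Type} [DecidableEq V] [Fintype T] (G A₁ A₂ : AOE V T)
    (h₁ : IsOutput G A₁) (h₂ : IsOutput G A₂) :
    ∀ u v : V, (u, v) ∈ A₁.unl → ∀ t t' : T, A₁.En t = u → A₁.St t' = v →
      (A₂.En t, A₂.St t') ∈ A₂.unl := by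
  intro u v huv t t' hEt hSt
  obtain ⟨hCan, hrtg1, hterm1⟩ := h₁
  obtain ⟨_, hrtg2, hterm2⟩ := h₂
  have hIG := canonical_inv hCan
  obtain ⟨hI1, hiff1⟩ := rtgStep_inv hrtg1 hIG
  obtain ⟨hI2, hiff2⟩ := rtgStep_inv hrtg2 hIG
  have hiff : ∀ a b, A₁.reach a b ↔ A₂.reach a b :=
    fun a b => (hiff1 a b).symm.trans (hiff2 a b)
  have he1 : (A₁.En t, A₁.St t') ∈ A₁.unl := by rw [hEt, hSt]; exact huv
  have hE := (term_edge_iff hI1 hterm1 t t').1 he1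
  exact (term_edge_iff hI2 hterm2 t t').2 ((estar_transfer hiff t t').1 hE)

end AOEPaper
end

section
/- Let G be a directed multigraph with task-labeled and unlabeled edges whose directed cycles consist only of unlabeled edges, and let C be a set of vertices lying on a common directed cycle of unlabeled edges in G. Let G' be the graph obtained from G by merging all vertices of C into a single vertex. Then G and G' have the same reachability relation on their tasks: for all tasks T ≠ T', T reaches T' in G if and only if T reaches T' in G', and |V(G')| < |V(G)|. -/
namespace AOEPaper

lemma chain_head_reach {α : Type*} {r : α → α → Prop} :
    ∀ {L : List α} {a x : α}, List.Chain r a L → x ∈ a :: L →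
      Relation.ReflTransGen r a x
  | [], a, x, _, hx => by
      simp at hx; subst hx; exact Relation.ReflTransGen.refl
  | b :: L, a, x, h, hx => by
      rcases List.chain_cons.1 h with ⟨hab, hL⟩
      rcases List.mem_cons.1 hx with rfl | hx
      · exact Relation.ReflTransGen.refl
      · exact Relation.ReflTransGen.head hab (chain_head_reach hL hx)

lemma chain_reach_last {α : Type*} {r : α → α → Prop} :
    ∀ {L : List α} {a d x : α}, List.Chain r a (L ++ [d]) → x ∈ a :: L →
      Relation.ReflTransGen r x d
  | [], a, d, x, h, hx => by
      simp at hx; subst hx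
      rcases List.chain_cons.1 h with ⟨had, _⟩
      exact Relation.ReflTransGen.single had
  | b :: L, a, d, x, h, hx => by
      rcases List.chain_cons.1 (h : List.Chain r a (b :: (L ++ [d]))) with ⟨hab, hL⟩
      rcases List.mem_cons.1 hx with rfl | hx
      · exact Relation.ReflTransGen.head hab
          (chain_reach_last hL List.mem_cons_self)
      · exact chain_reach_last hL hx

/-- In a directed multigraph whose directed cycles consist only of
unlabeled edges, merging a set `C` (of at least two vertices) lying on a common directed
cycle of unlabeled edges into a single vertex preserves the reachability relation on the
tasks and strictly decreases the number of vertices. -/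
theorem stmt16 {V T : Type} [DecidableEq V] (G : AOE V T)
    (honlyUnl : ∀ t : T, ¬ Relation.ReflTransGen G.adj (G.En t) (G.St t))
    (C : Finset V) (hsub : C ⊆ G.verts) (hcard : 2 ≤ C.card) (c : V) (hc : c ∈ C)
    (hcyc : ∃ (a : V) (l : List V),
      List.Chain (fun x y => (x, y) ∈ G.unl) a (l ++ [a]) ∧ ∀ x ∈ C, x ∈ a :: l) :
    (∀ t t' : T, t ≠ t' → (G.reach t t' ↔ (G.mergeSet C c).reach t t')) ∧
      (G.mergeSet C c).verts.card < G.verts.card := by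
  set f : V → V := fun x => if x ∈ C then c else x with hf
  set G' := G.mergeSet C c with hG'
  -- forward: each step maps
  have hstep : ∀ a b, G.adj a b → G'.adj (f a) (f b) := by
    intro a b hab
    rcases hab with h | ⟨t, rfl, rfl⟩
    · exact Or.inl (Multiset.mem_map.2 ⟨(a, b), h, rfl⟩)
    · exact Or.inr ⟨t, rfl, rfl⟩
  -- mutual reachability inside C
  have cycC : ∀ x ∈ C, ∀ y ∈ C, Relation.ReflTransGen G.adj x y := by
    obtain ⟨a, l, hch, hmem⟩ := hcyc
    intro x hx y hy
    have hxa : Relation.ReflTransGen (fun p q => (p, q) ∈ G.unl) x a :=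
      chain_reach_last hch (hmem x hx)
    have hay : Relation.ReflTransGen (fun p q => (p, q) ∈ G.unl) a y := by
      refine chain_head_reach hch ?_
      rcases List.mem_cons.1 (hmem y hy) with rfl | h
      · exact List.mem_cons_self
      · exact List.mem_cons_of_mem _ (List.mem_append_left _ h)
    exact Relation.ReflTransGen.mono (fun _ _ h => Or.inl h) _ _ (hxa.trans hay)
  -- same-fiber reachability
  have fiber : ∀ x p : V, f x = f p → Relation.ReflTransGen G.adj x p := by
    intro x p h
    by_cases hx : x ∈ C <;> by_cases hp : p ∈ C <;>
      simp only [hf, hx, hp, if_pos, if_neg, if_true, if_false] at h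
    · exact cycC x hx p hp
    · exact absurd (h ▸ hc) hp
    · exact absurd (h ▸ hc : x ∈ C) hx
    · exact h ▸ Relation.ReflTransGen.refl
  -- lift a single step back
  have backstep : ∀ a' b', G'.adj a' b' →
      ∃ x y, f x = a' ∧ f y = b' ∧ G.adj x y := by
    intro a' b' h
    rcases h with h | ⟨t, h1, h2⟩
    · obtain ⟨⟨x, y⟩, hxy, heq⟩ := Multiset.mem_map.1 h
      obtain ⟨h1, h2⟩ := Prod.mk.injEq .. ▸ heq
      exact ⟨x, y, h1, h2, Or.inl hxy⟩
    · exact ⟨G.St t, G.En t, h1, h2, Or.inr ⟨t, rfl, rfl⟩⟩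
  -- lift paths back
  have hback : ∀ {a' b'}, Relation.ReflTransGen G'.adj a' b' →
      ∀ x y, f x = a' → f y = b' → Relation.ReflTransGen G.adj x y := by
    intro a' b' h
    induction h using Relation.ReflTransGen.head_induction_on with
    | refl => intro x y hx hy; exact fiber x y (hx.trans hy.symm)
    | head hadj _ ih =>
        intro x y hx hy
        obtain ⟨p, q, hp, hq, hpq⟩ := backstep _ _ hadj
        exact ((fiber x p (hx.trans hp.symm)).trans
          (Relation.ReflTransGen.single hpq)).trans (ih q y hq hy)
  constructor
  · intro t t' _
    constructor
    · intro h
      exact Relation.ReflTransGen.lift f hstep _ _ h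
    · intro h
      exact hback h (G.En t) (G.St t') rfl rfl
  · have h1 : (G.verts \ C).card = G.verts.card - C.card := Finset.card_sdiff_of_subset hsub
    have h2 : (insert c (G.verts \ C)).card ≤ (G.verts \ C).card + 1 :=
      Finset.card_insert_le _ _
    have h3 : C.card ≤ G.verts.card := Finset.card_le_card hsub
    have : G'.verts = insert c (G.verts \ C) := rfl
    rw [this]
    omega

end AOEPaper
end
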